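/- arXiv:2203.01865 — 9 statements merged into one kernel-verified Lean document; each statement's English description precedes it below -/
import Mathlib

section
/- Let n, d ≥ 2, let v_1,...,v_{n+1} be the simplex frame in ℝ^n, and let T = Σ_{k=1}^{n+1} v_k^{⊗d}. A pair (v, μ) with v = Σ_{k=1}^n α_k v_k (where Σ|α_k| > 0) is an eigenpair of T if and only if for each 1 ≤ k ≤ n: μ α_k = (α_k − (1/n)Σ_{j≠k, j≤n} α_j)^{d−1} − (−(1/n)Σ_{j=1}^n α_j)^{d−1}. -/
open scoped RealInnerProductSpace BigOperators

noncomputable def simplexVec (n : ℕ) (k : Fin (n + 1)) : EuclideanSpace ℝ (Fin n) :=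
  if h : (k : ℕ) < n then
    Real.sqrt (1 + 1 / n) • EuclideanSpace.single ⟨k, h⟩ 1
      - ((Real.sqrt (n + 1) - 1) / (n : ℝ) ^ ((3 : ℝ) / 2)) •
        (WithLp.toLp 2 (fun _ => (1 : ℝ)) : EuclideanSpace ℝ (Fin n))
  else
    -(1 / Real.sqrt n) • (WithLp.toLp 2 (fun _ => (1 : ℝ)) : EuclideanSpace ℝ (Fin n))

lemma simplexVec_apply_lt (n : ℕ) (k : Fin (n+1)) (h : (k:ℕ) < n) (j : Fin n) :
    simplexVec n k j = Real.sqrt (1 + 1/n) * (if j = ⟨k,h⟩ then 1 else 0)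
      - (Real.sqrt (n + 1) - 1) / (n : ℝ) ^ ((3 : ℝ) / 2) := by
  rw [simplexVec, dif_pos h]
  show Real.sqrt (1 + 1/n) * (EuclideanSpace.single (⟨k,h⟩ : Fin n) (1:ℝ) j) - _ * 1 = _
  rw [EuclideanSpace.single_apply]
  ring

lemma simplexVec_apply_last (n : ℕ) (k : Fin (n+1)) (h : ¬ (k:ℕ) < n) (j : Fin n) :
    simplexVec n k j = -(1 / Real.sqrt n) := by
  rw [simplexVec, dif_neg h]
  show -(1 / Real.sqrt n) * 1 = _
  ring

lemma gram (n : ℕ) (hn : 1 ≤ n) (i j : Fin (n+1)) :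
    ⟪simplexVec n i, simplexVec n j⟫ = if i = j then 1 else -1/(n:ℝ) := by
  have hn0 : (0:ℝ) < n := by exact_mod_cast Nat.lt_of_lt_of_le Nat.zero_lt_one hn
  set a := Real.sqrt n with ha_def
  set b := Real.sqrt ((n:ℝ)+1) with hb_def
  have ha : a * a = n := Real.mul_self_sqrt hn0.le
  have hb : b * b = (n:ℝ)+1 := Real.mul_self_sqrt (by positivity)
  have ha0 : 0 < a := Real.sqrt_pos.mpr hn0
  have hs : Real.sqrt (1 + 1/(n:ℝ)) = b / a := by
    rw [show (1:ℝ)+1/n = ((n:ℝ)+1)/n by field_simp, Real.sqrt_div (by positivity)]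
  have hp : (n:ℝ) ^ ((3:ℝ)/2) = n * a := by
    rw [show ((3:ℝ)/2) = 1 + (1/2:ℝ) by norm_num, Real.rpow_add hn0, Real.rpow_one,
      ← Real.sqrt_eq_rpow]
  have hInner : ⟪simplexVec n i, simplexVec n j⟫ = ∑ t, simplexVec n i t * simplexVec n j t := by
    simp [PiLp.inner_apply, RCLike.inner_apply, conj_trivial]
    exact Finset.sum_congr rfl fun _ _ => mul_comm _ _
  set s := Real.sqrt (1 + 1/(n:ℝ))
  set c := (b - 1) / (n:ℝ) ^ ((3:ℝ)/2) with hc_def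
  have hc : c = (b-1)/((n:ℝ)*a) := by rw [hc_def, hp]
  by_cases hi : (i:ℕ) < n <;> by_cases hj : (j:ℕ) < n
  · -- both < n
    have hij : (i = j) ↔ ((⟨i,hi⟩ : Fin n) = ⟨j,hj⟩) := by
      constructor
      · intro h; simp [h]
      · intro h; exact Fin.ext (by simpa using congrArg Fin.val h)
    rw [hInner]
    have hterm : ∀ t : Fin n, simplexVec n i t * simplexVec n j t
        = s^2 * ((if t = ⟨i,hi⟩ then (1:ℝ) else 0) * (if t = ⟨j,hj⟩ then 1 else 0))
          - (s*c) * (if t = ⟨i,hi⟩ then 1 else 0)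
          - (s*c) * (if t = ⟨j,hj⟩ then 1 else 0) + c^2 := by
      intro t
      rw [simplexVec_apply_lt n i hi t, simplexVec_apply_lt n j hj t]
      ring
    rw [Finset.sum_congr rfl (fun t _ => hterm t)]
    have e1 : ∑ t : Fin n, (if t = (⟨i,hi⟩ : Fin n) then (1:ℝ) else 0) * (if t = ⟨j,hj⟩ then 1 else 0)
        = if (⟨i,hi⟩ : Fin n) = ⟨j,hj⟩ then 1 else 0 := by
      simp only [ite_mul, one_mul, zero_mul]
      rw [Finset.sum_ite_eq' Finset.univ (⟨i,hi⟩:Fin n) (fun t => if t = ⟨j,hj⟩ then (1:ℝ) else 0)]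
      simp
    have e2 : ∑ t : Fin n, (if t = (⟨i,hi⟩ : Fin n) then (1:ℝ) else 0) = 1 := by
      simp [Finset.sum_ite_eq']
    have e3 : ∑ t : Fin n, (if t = (⟨j,hj⟩ : Fin n) then (1:ℝ) else 0) = 1 := by
      simp [Finset.sum_ite_eq']
    rw [Finset.sum_add_distrib, Finset.sum_sub_distrib, Finset.sum_sub_distrib,
      ← Finset.mul_sum, ← Finset.mul_sum, ← Finset.mul_sum, e1, e2, e3, Finset.sum_const,
      Finset.card_univ, Fintype.card_fin, nsmul_eq_mul]
    by_cases h : i = j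
    · rw [if_pos h, if_pos (hij.mp h)]
      rw [hs, hc, ← ha]
      have hane : a ≠ 0 := ne_of_gt ha0
      field_simp
      linear_combination (a^2-1) * hb - (a^2-1) * ha
    · rw [if_neg h, if_neg (fun hh => h (hij.mpr hh))]
      rw [hs, hc, ← ha]
      have hane : a ≠ 0 := ne_of_gt ha0
      field_simp
      linear_combination (-1)*hb + ha
  · -- i < n, j = last
    have hne : i ≠ j := fun h => hj (h ▸ hi)
    rw [hInner, if_neg hne]
    have hterm : ∀ t : Fin n, simplexVec n i t * simplexVec n j t
        = (-(1/a) * s) * (if t = ⟨i,hi⟩ then 1 else 0) + (1/a) * c := by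
      intro t
      rw [simplexVec_apply_lt n i hi t, simplexVec_apply_last n j hj t]
      ring
    rw [Finset.sum_congr rfl (fun t _ => hterm t), Finset.sum_add_distrib, ← Finset.mul_sum]
    have e2 : ∑ t : Fin n, (if t = (⟨i,hi⟩ : Fin n) then (1:ℝ) else 0) = 1 := by
      simp [Finset.sum_ite_eq']
    rw [e2, Finset.sum_const, Finset.card_univ, Fintype.card_fin, nsmul_eq_mul]
    rw [hs, hc, ← ha]
    have hane : a ≠ 0 := ne_of_gt ha0
    field_simp
    ring
  · -- i = last, j < n
    have hne : i ≠ j := fun h => hi (h ▸ hj)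
    rw [hInner, if_neg hne]
    have hterm : ∀ t : Fin n, simplexVec n i t * simplexVec n j t
        = (-(1/a) * s) * (if t = ⟨j,hj⟩ then 1 else 0) + (1/a) * c := by
      intro t
      rw [simplexVec_apply_last n i hi t, simplexVec_apply_lt n j hj t]
      ring
    rw [Finset.sum_congr rfl (fun t _ => hterm t), Finset.sum_add_distrib, ← Finset.mul_sum]
    have e2 : ∑ t : Fin n, (if t = (⟨j,hj⟩ : Fin n) then (1:ℝ) else 0) = 1 := by
      simp [Finset.sum_ite_eq']
    rw [e2, Finset.sum_const, Finset.card_univ, Fintype.card_fin, nsmul_eq_mul]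
    rw [hs, hc, ← ha]
    have hane : a ≠ 0 := ne_of_gt ha0
    field_simp
    ring
  · -- both last
    have hij : i = j := by
      have h1 : (i:ℕ) = n := Nat.le_antisymm (Nat.lt_succ_iff.mp i.isLt) (Nat.le_of_not_lt hi)
      have h2 : (j:ℕ) = n := Nat.le_antisymm (Nat.lt_succ_iff.mp j.isLt) (Nat.le_of_not_lt hj)
      exact Fin.ext (h1.trans h2.symm)
    rw [hInner, if_pos hij]
    have hterm : ∀ t : Fin n, simplexVec n i t * simplexVec n j t = (1/a) * (1/a) := by
      intro t
      rw [simplexVec_apply_last n i hi t, simplexVec_apply_last n j hj t]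
      ring
    rw [Finset.sum_congr rfl (fun t _ => hterm t), Finset.sum_const, Finset.card_univ,
      Fintype.card_fin]
    rw [nsmul_eq_mul, ← ha]
    have hane : a ≠ 0 := ne_of_gt ha0
    field_simp

lemma simplexVec_castSucc_apply (n : ℕ) (k j : Fin n) :
    simplexVec n k.castSucc j = Real.sqrt (1 + 1/n) * (if j = k then 1 else 0)
      - (Real.sqrt ((n:ℝ) + 1) - 1) / (n : ℝ) ^ ((3 : ℝ) / 2) := by
  have h : ((k.castSucc : Fin (n+1)) : ℕ) < n := by simpa using k.isLt
  rw [simplexVec_apply_lt n k.castSucc h]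
  have : (⟨(k.castSucc : Fin (n+1)), h⟩ : Fin n) = k := Fin.ext (by simp)
  rw [this]

lemma key_scalar (n : ℕ) (hn : 1 ≤ n) :
    Real.sqrt (1 + 1/(n:ℝ))
      - (n:ℝ) * ((Real.sqrt ((n:ℝ)+1) - 1) / (n:ℝ) ^ ((3:ℝ)/2)) = 1 / Real.sqrt n := by
  have hn0 : (0:ℝ) < n := by exact_mod_cast Nat.lt_of_lt_of_le Nat.zero_lt_one hn
  set a := Real.sqrt n with ha_def
  set b := Real.sqrt ((n:ℝ)+1) with hb_def
  have ha : a * a = n := Real.mul_self_sqrt hn0.le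
  have ha0 : 0 < a := Real.sqrt_pos.mpr hn0
  have hs : Real.sqrt (1 + 1/(n:ℝ)) = b / a := by
    rw [show (1:ℝ)+1/n = ((n:ℝ)+1)/n by field_simp, Real.sqrt_div (by positivity)]
  have hp : (n:ℝ) ^ ((3:ℝ)/2) = n * a := by
    rw [show ((3:ℝ)/2) = 1 + (1/2:ℝ) by norm_num, Real.rpow_add hn0, Real.rpow_one,
      ← Real.sqrt_eq_rpow]
  rw [hs, hp, ← ha]
  have hane : a ≠ 0 := ne_of_gt ha0
  field_simp
  ring

lemma simplex_last_eq (n : ℕ) (hn : 1 ≤ n) :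
    simplexVec n (Fin.last n) = - ∑ k : Fin n, simplexVec n k.castSucc := by
  have hlt : ¬ ((Fin.last n : Fin (n+1)) : ℕ) < n := by simp
  ext j
  rw [show (-(∑ k : Fin n, simplexVec n k.castSucc) : EuclideanSpace ℝ (Fin n)) j
      = -((∑ k : Fin n, simplexVec n k.castSucc) j) from rfl,
    WithLp.ofLp_sum, Finset.sum_apply j Finset.univ _, simplexVec_apply_last n _ hlt]
  rw [Finset.sum_congr rfl (fun k _ => simplexVec_castSucc_apply n k j)]
  rw [Finset.sum_sub_distrib, ← Finset.mul_sum, Finset.sum_ite_eq Finset.univ j (fun _ => (1:ℝ)),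
    Finset.sum_const, Finset.card_univ, Fintype.card_fin, nsmul_eq_mul]
  have := key_scalar n hn
  simp only [Finset.mem_univ, if_pos, mul_one]
  linarith

lemma simplex_indep (n : ℕ) (hn : 1 ≤ n) (β : Fin n → ℝ)
    (h : ∑ k : Fin n, β k • simplexVec n k.castSucc = 0) : ∀ k, β k = 0 := by
  have hn0 : (0:ℝ) < n := by exact_mod_cast Nat.lt_of_lt_of_le Nat.zero_lt_one hn
  set s := Real.sqrt (1 + 1/(n:ℝ)) with hs_def
  set c := (Real.sqrt ((n:ℝ)+1) - 1) / (n:ℝ) ^ ((3:ℝ)/2) with hc_def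
  have hs0 : 0 < s := Real.sqrt_pos.mpr (by positivity)
  have hcomp : ∀ j : Fin n, s * β j - (∑ k, β k) * c = 0 := by
    intro j
    have hj := congrArg (fun x : EuclideanSpace ℝ (Fin n) => x j) h
    rw [show ((0 : EuclideanSpace ℝ (Fin n)) j) = 0 from rfl] at hj
    rw [show ((∑ k : Fin n, β k • simplexVec n k.castSucc) j)
        = ∑ k : Fin n, β k * simplexVec n k.castSucc j from
        by rw [WithLp.ofLp_sum, Finset.sum_apply]; rfl] at hj
    rw [Finset.sum_congr rfl (fun k _ => by
      rw [simplexVec_castSucc_apply n k j])] at hj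
    rw [Finset.sum_congr rfl (fun k _ => by
      show β k * (s * (if j = k then 1 else 0) - c)
        = s * (β k * (if j = k then 1 else 0)) - β k * c
      ring)] at hj
    rw [Finset.sum_sub_distrib, ← Finset.mul_sum, ← Finset.sum_mul] at hj
    simp only [mul_ite, mul_one, mul_zero, Finset.sum_ite_eq, Finset.mem_univ, if_pos] at hj
    linarith
  have hsum0 : (∑ k, β k) = 0 := by
    have hsums := Finset.sum_eq_zero (s := Finset.univ) (fun j (_ : j ∈ Finset.univ) => hcomp j)
    rw [Finset.sum_sub_distrib, ← Finset.mul_sum, Finset.sum_const, Finset.card_univ,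
      Fintype.card_fin, nsmul_eq_mul] at hsums
    -- hsums : s * ∑ β - n * ((∑β) * c) = 0
    have hkey := key_scalar n hn
    -- (s - n*c) * Σβ = 0 and s - n*c = 1/√n ≠ 0
    have hne : s - (n:ℝ) * c ≠ 0 := by
      rw [hkey]
      positivity
    have : (s - (n:ℝ) * c) * (∑ k, β k) = 0 := by ring_nf; ring_nf at hsums; linarith
    exact (mul_eq_zero.mp this).resolve_left hne |>.symm ▸ rfl
  intro k
  have := hcomp k
  rw [hsum0] at this
  have : s * β k = 0 := by linarith
  exact (mul_eq_zero.mp this).resolve_left (ne_of_gt hs0)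

theorem stmt_3 (n d : ℕ) (hn : 2 ≤ n) (hd : 2 ≤ d)
    (α : Fin n → ℝ) (hα : 0 < ∑ k, |α k|) (μ : ℝ)
    (v : EuclideanSpace ℝ (Fin n))
    (hv : v = ∑ k : Fin n, α k • simplexVec n k.castSucc) :
    (∑ k : Fin (n + 1), ⟪v, simplexVec n k⟫ ^ (d - 1) • simplexVec n k = μ • v) ↔
      ∀ k : Fin n,
        μ * α k =
          (α k - (1 / (n : ℝ)) * ∑ j ∈ Finset.univ.erase k, α j) ^ (d - 1) -
            (-((1 / (n : ℝ)) * ∑ j, α j)) ^ (d - 1) := by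
  have hn1 : 1 ≤ n := le_trans one_le_two hn
  have hn0 : (0:ℝ) < n := by exact_mod_cast Nat.lt_of_lt_of_le Nat.zero_lt_one hn1
  set w : Fin n → EuclideanSpace ℝ (Fin n) := fun k => simplexVec n k.castSucc with hw_def
  set P : Fin n → ℝ :=
    fun k => (α k - (1 / (n : ℝ)) * ∑ j ∈ Finset.univ.erase k, α j) ^ (d - 1) with hP_def
  set Q : ℝ := (-((1 / (n : ℝ)) * ∑ j, α j)) ^ (d - 1) with hQ_def
  -- inner product computations
  have hgram : ∀ (j k : Fin n), ⟪w j, w k⟫ = if j = k then 1 else -1/(n:ℝ) := by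
    intro j k
    rw [hw_def, gram n hn1]
    simp [Fin.castSucc_inj]
  have h1 : ∀ k : Fin n, ⟪v, w k⟫ = α k - (1 / (n : ℝ)) * ∑ j ∈ Finset.univ.erase k, α j := by
    intro k
    rw [hv, sum_inner]
    rw [Finset.sum_congr rfl (fun j _ => by
      rw [real_inner_smul_left, hgram j k])]
    rw [← Finset.add_sum_erase _ _ (Finset.mem_univ k), if_pos rfl]
    rw [Finset.sum_congr rfl (fun j hj => by
      rw [if_neg (Finset.ne_of_mem_erase hj)])]
    rw [show ∑ j ∈ Finset.univ.erase k, α j * (-1/(n:ℝ))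
        = -((1/(n:ℝ)) * ∑ j ∈ Finset.univ.erase k, α j) by
      rw [← Finset.sum_mul]; ring]
    ring
  have h2 : ⟪v, simplexVec n (Fin.last n)⟫ = -((1 / (n : ℝ)) * ∑ j, α j) := by
    rw [hv, sum_inner]
    rw [Finset.sum_congr rfl (fun j _ => by
      rw [real_inner_smul_left, gram n hn1,
        if_neg (Fin.ne_last_of_lt (Fin.castSucc_lt_last j))])]
    rw [← Finset.sum_mul]
    ring
  have step1 : ∑ k : Fin (n + 1), ⟪v, simplexVec n k⟫ ^ (d - 1) • simplexVec n k
      = (∑ k : Fin n, P k • w k) + Q • simplexVec n (Fin.last n) := by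
    rw [Fin.sum_univ_castSucc]
    congr 1
    · exact Finset.sum_congr rfl fun k _ => by rw [h1 k]
    · rw [h2]
  have step2 : Q • simplexVec n (Fin.last n) = - ∑ k : Fin n, Q • w k := by
    rw [simplex_last_eq n hn1, smul_neg, Finset.smul_sum]
  have step3 : μ • v = ∑ k : Fin n, (μ * α k) • w k := by
    rw [hv, Finset.smul_sum]
    exact Finset.sum_congr rfl fun k _ => by rw [smul_smul]
  have hsum : ∑ k : Fin n, (P k - Q - μ * α k) • w k
      = (∑ k : Fin n, P k • w k) - (∑ k : Fin n, Q • w k) - ∑ k : Fin n, (μ * α k) • w k := by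
    rw [← Finset.sum_sub_distrib, ← Finset.sum_sub_distrib]
    exact Finset.sum_congr rfl fun k _ => by rw [sub_smul, sub_smul]
  constructor
  · intro hE k
    rw [step1, step2, step3] at hE
    have h0 : ∑ k : Fin n, (P k - Q - μ * α k) • w k = 0 := by
      rw [hsum, sub_eq_zero, ← hE]
      abel
    have := simplex_indep n hn1 _ h0 k
    linarith
  · intro hc
    rw [step1, step2, step3]
    have h0 : ∑ k : Fin n, (P k - Q - μ * α k) • w k = 0 :=
      Finset.sum_eq_zero fun k _ => by
        rw [show P k - Q - μ * α k = 0 by have := hc k; linarith, zero_smul]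
    rw [hsum] at h0
    rw [← sub_eq_zero]
    rw [← h0]
    abel
end

section
/- Let n ≥ 2, d ≥ 4 even, and g(s) = ((n+1)s − 1)^{d−1} + 1. Then there exists s* ∈ [1/n, 2/(n+1)) such that the polynomial p(s) = g(s)/s is strictly decreasing on [0, s*] and strictly increasing on [s*, ∞); moreover s* = 1/n if and only if (n,d) = (2,4). -/
lemma aux_nat_le (m : ℕ) (hm : 2 ≤ m) : ∀ n : ℕ, 2 ≤ n → m*(n+1)+n ≤ n^(m+1) := by
  induction m, hm using Nat.le_induction with
  | base =>
    intro n hn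
    have h3 : n^(2+1) = n*n*n := by ring
    nlinarith
  | succ m hm ih =>
    intro n hn
    have h1 := ih n hn
    have h2 : n^(m+1) ≥ n^3 := Nat.pow_le_pow_right (by omega) (by omega)
    have h3 : n^3 ≥ n+1 := by nlinarith [show n^3 = n*n*n from by ring]
    have h4 : n^(m+1+1) = n^(m+1)*n := pow_succ n (m+1)
    nlinarith

lemma aux_nat_eq (n m : ℕ) (hn : 2 ≤ n) (hm : 2 ≤ m) (h : m*(n+1)+n = n^(m+1)) :
    n = 2 ∧ m = 2 := by
  rcases eq_or_lt_of_le hm with hm2 | hm3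
  · -- m = 2
    subst hm2
    have h3 : n^3 = n*n*n := by ring
    constructor
    · by_contra hne
      have hn3 : 3 ≤ n := by omega
      have h4 : n^(2+1) = n*n*n := by ring
      nlinarith [Nat.mul_le_mul hn3 (le_refl n), Nat.mul_le_mul (Nat.mul_le_mul hn3 (le_refl n)) (le_refl n)]
    · rfl
  · -- m ≥ 3 : strict
    exfalso
    have h1 := aux_nat_le (m-1) (by omega) n hn
    have hm1 : m - 1 + 1 = m := by omega
    rw [hm1] at h1
    have h2 : n^m ≥ n^3 := Nat.pow_le_pow_right (by omega) (by omega)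
    have h3 : n^3 ≥ n+2 := by nlinarith [show n^3 = n*n*n from by ring]
    have h4 : n^(m+1) = n^m*n := pow_succ n m
    nlinarith

lemma aux_alg (m : ℕ) (hm : 1 ≤ m) (t : ℝ) (h0 : 0 < t) (h1 : t < 1) :
    t^m * ((m:ℝ)*(1-t)+1) < 1 := by
  have key : 1 - t^m * ((m:ℝ)*(1-t)+1)
      = (1-t) * ((∑ k ∈ Finset.range m, t^k) - m*t^m) := by
    have hs : ∀ S : ℝ, S = ∑ k ∈ Finset.range m, t^k → S*(t-1) = t^m - 1 :=
      fun S hS => hS ▸ geom_sum_mul t m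
    have := hs _ rfl
    ring_nf
    ring_nf at this
    linarith
  have hpos : (m:ℝ)*t^m < ∑ k ∈ Finset.range m, t^k := by
    calc (m:ℝ)*t^m = ∑ k ∈ Finset.range m, t^m := by
          rw [Finset.sum_const, Finset.card_range]; ring
      _ < ∑ k ∈ Finset.range m, t^k := by
          apply Finset.sum_lt_sum_of_nonempty (by simpa using by omega)
          intro k hk
          exact pow_lt_pow_right_of_lt_one₀ h0 h1 (Finset.mem_range.mp hk)
  nlinarith [mul_pos (by linarith : (0:ℝ) < 1 - t) (by linarith : (0:ℝ) < (∑ k ∈ Finset.range m, t^k) - m*t^m)]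

noncomputable def Qf (N : ℝ) (m : ℕ) (s : ℝ) : ℝ :=
  N * ∑ k ∈ Finset.range (m+1), (1 - N*s)^k

noncomputable def Df (N : ℝ) (m : ℕ) (s : ℝ) : ℝ :=
  N * ∑ k ∈ Finset.range (m+1), ((k:ℝ) * (1 - N*s)^(k-1) * (-N))

noncomputable def Phif (N : ℝ) (m : ℕ) (s : ℝ) : ℝ :=
  (N*s - 1)^m * ((m:ℝ)*N*s + 1) - 1

lemma Qf_hasDeriv (N : ℝ) (m : ℕ) (s : ℝ) : HasDerivAt (Qf N m) (Df N m s) s := by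
  have h1 : HasDerivAt (fun s : ℝ => 1 - N*s) (-N) s := by
    simpa using ((hasDerivAt_id s).const_mul N).const_sub (1:ℝ)
  have h2 : HasDerivAt (fun s => ∑ k ∈ Finset.range (m+1), (1 - N*s)^k)
      (∑ k ∈ Finset.range (m+1), ((k:ℝ) * (1 - N*s)^(k-1) * (-N))) s :=
    HasDerivAt.fun_sum (fun k _ => h1.fun_pow k)
  exact h2.const_mul N

lemma Qf_cont (N : ℝ) (m : ℕ) : Continuous (Qf N m) := by
  unfold Qf; fun_prop

lemma G_hasDeriv (N : ℝ) (m : ℕ) (s : ℝ) :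
    HasDerivAt (fun s => (N*s - 1)^(m+1) + 1) (((m:ℝ)+1)*N*(N*s-1)^m) s := by
  have h1 : HasDerivAt (fun s : ℝ => N*s - 1) N s := by
    simpa using ((hasDerivAt_id s).const_mul N).sub_const 1
  have h2 := (h1.fun_pow (m+1)).add_const 1
  refine h2.congr_deriv ?_
  rw [Nat.add_sub_cancel]
  push_cast
  ring

lemma Qf_key1 (N : ℝ) (m : ℕ) (hm : Odd (m+1)) (s : ℝ) :
    s * Qf N m s = (N*s - 1)^(m+1) + 1 := by
  have hx : (N*s - 1)^(m+1) = -(1 - N*s)^(m+1) := by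
    rw [show N*s - 1 = -(1 - N*s) by ring, hm.neg_pow]
  rw [hx, Qf]
  linear_combination (-1 : ℝ) * geom_sum_mul (1 - N*s) (m+1)

lemma Qf_key3 (N : ℝ) (m : ℕ) (hm : Odd (m+1)) (s : ℝ) :
    s^2 * Df N m s = Phif N m s := by
  have h1 : HasDerivAt (fun s => s * Qf N m s) (1 * Qf N m s + s * Df N m s) s :=
    (hasDerivAt_id s).mul (Qf_hasDeriv N m s)
  have h2 : (fun s => s * Qf N m s) = (fun s => (N*s - 1)^(m+1) + 1) :=
    funext (Qf_key1 N m hm)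
  rw [h2] at h1
  have h3 := h1.unique (G_hasDeriv N m s)
  have h4 := Qf_key1 N m hm s
  rw [Phif]
  linear_combination s * h3 - h4

lemma Phif_cont (N : ℝ) (m : ℕ) : Continuous (Phif N m) := by
  unfold Phif; fun_prop

lemma Phif_mono (N : ℝ) (hN : 0 < N) (m : ℕ) (hm : 2 ≤ m) :
    StrictMonoOn (Phif N m) (Set.Ici (1/N)) := by
  intro a ha b hb hab
  simp only [Set.mem_Ici] at ha hb
  have h1N : (0:ℝ) < 1/N := by positivity
  have hxa : 0 ≤ N*a - 1 := by
    have := (div_le_iff₀ hN).mp ha; linarith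
  have hxb : N*a - 1 < N*b - 1 := by nlinarith
  have h1 : (N*a-1)^m < (N*b-1)^m := pow_lt_pow_left₀ hxb hxa (by omega)
  have hbpos : 0 < b := lt_of_lt_of_le h1N (le_trans ha hab.le)
  have hfa : (m:ℝ)*N*a + 1 ≤ (m:ℝ)*N*b + 1 := by
    have hm0 : (0:ℝ) ≤ (m:ℝ) := Nat.cast_nonneg m
    nlinarith
  have hfb : 0 < (m:ℝ)*N*b + 1 := by positivity
  show Phif N m a < Phif N m b
  rw [Phif, Phif]
  have step1 : (N*a-1)^m * ((m:ℝ)*N*a + 1) ≤ (N*a-1)^m * ((m:ℝ)*N*b + 1) :=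
    mul_le_mul_of_nonneg_left hfa (pow_nonneg hxa m)
  have step2 : (N*a-1)^m * ((m:ℝ)*N*b + 1) < (N*b-1)^m * ((m:ℝ)*N*b + 1) :=
    mul_lt_mul_of_pos_right h1 hfb
  linarith

lemma Phif_val1 (N : ℝ) (hN : 0 < N) (m : ℕ) (hm : 2 ≤ m) : Phif N m (1/N) = -1 := by
  rw [Phif, show N*(1/N) - 1 = 0 by field_simp; norm_num, zero_pow (by omega)]
  ring

lemma Phif_val2 (N : ℝ) (hN : 0 < N) (m : ℕ) : Phif N m (2/N) = 2*m := by
  rw [Phif, show N*(2/N) - 1 = 1 by field_simp; norm_num, one_pow,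
    show (m:ℝ)*N*(2/N) = 2*m by field_simp]
  ring

lemma Phif_neg_small (N : ℝ) (hN : 0 < N) (m : ℕ) (hm : 2 ≤ m) (hme : Even m)
    (s : ℝ) (hs : 0 < s) (hsN : s < 1/N) : Phif N m s < 0 := by
  have ht0 : 0 < 1 - N*s := by
    have := (lt_div_iff₀ hN).mp hsN; linarith
  have ht1 : 1 - N*s < 1 := by nlinarith
  have halg := aux_alg m (by omega) (1 - N*s) ht0 ht1
  have hx : (N*s-1)^m = (1-N*s)^m := by
    rw [show N*s - 1 = -(1 - N*s) by ring, hme.neg_pow]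
  rw [Phif, hx]
  nlinarith [halg]

theorem stmt_8 (n d : ℕ) (hn : 2 ≤ n) (hd : 4 ≤ d) (hdeven : Even d)
    (g p : ℝ → ℝ)
    (hg : ∀ s, g s = (((n : ℝ) + 1) * s - 1) ^ (d - 1) + 1)
    (hp0 : p 0 = deriv g 0)
    (hp : ∀ s : ℝ, s ≠ 0 → p s = g s / s) :
    ∃ sstar : ℝ, sstar ∈ Set.Ico (1 / (n : ℝ)) (2 / ((n : ℝ) + 1)) ∧
      StrictAntiOn p (Set.Icc 0 sstar) ∧ StrictMonoOn p (Set.Ici sstar) ∧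
      (sstar = 1 / (n : ℝ) ↔ n = 2 ∧ d = 4) := by
  obtain ⟨m, hm2, hdm⟩ : ∃ m, 2 ≤ m ∧ d = m + 2 := ⟨d-2, by omega, by omega⟩
  set N : ℝ := (n:ℝ) + 1 with hNdef
  have hmeven : Even m := by
    rcases hdeven with ⟨k, hk⟩; exact ⟨k-1, by omega⟩
  have hmodd : Odd (m+1) := hmeven.add_one
  have hd1 : d - 1 = m + 1 := by omega
  have hn2 : (2:ℝ) ≤ (n:ℝ) := by exact_mod_cast hn
  have hnpos : (0:ℝ) < (n:ℝ) := by linarith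
  have hNpos : (0:ℝ) < N := by rw [hNdef]; linarith
  have hgfun : g = fun s => (N*s - 1)^(m+1) + 1 := by
    funext s; rw [hg, hd1, hNdef]
  -- p = Qf N m
  have hpq : p = Qf N m := by
    funext s
    rcases eq_or_ne s 0 with rfl | hs
    · rw [hp0, hgfun, (G_hasDeriv N m 0).deriv]
      rw [Qf]
      rw [show N*(0:ℝ) - 1 = -1 by ring, hmeven.neg_one_pow]
      simp
      ring
    · rw [hp s hs, hgfun]
      show ((N*s - 1)^(m+1) + 1) / s = _
      rw [← Qf_key1 N m hmodd s]
      exact mul_div_cancel_left₀ _ hs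
  -- phi values and IVT
  have h1N : (0:ℝ) < 1/N := by positivity
  have hle : (1:ℝ)/N ≤ 2/N := by
    rw [div_le_div_iff₀ hNpos hNpos]; nlinarith
  have hivt := intermediate_value_Icc hle (Phif_cont N m).continuousOn
  have h0mem : (0:ℝ) ∈ Set.Icc (Phif N m (1/N)) (Phif N m (2/N)) := by
    rw [Phif_val1 N hNpos m hm2, Phif_val2 N hNpos m]
    constructor
    · linarith
    · have : (2:ℝ) ≤ (m:ℝ) := by exact_mod_cast hm2
      linarith
  obtain ⟨sstar, hsmem, hs0⟩ := hivt h0mem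
  have hs1 : 1/N < sstar := by
    rcases eq_or_lt_of_le hsmem.1 with h | h
    · exfalso
      rw [← h, Phif_val1 N hNpos m hm2] at hs0
      norm_num at hs0
    · exact h
  have hs2 : sstar < 2/N := by
    rcases eq_or_lt_of_le hsmem.2 with h | h
    · exfalso
      rw [h, Phif_val2 N hNpos m] at hs0
      have : (2:ℝ) ≤ (m:ℝ) := by exact_mod_cast hm2
      linarith [hs0]
    · exact h
  have hspos : 0 < sstar := lt_trans h1N hs1
  -- sign of Phif
  have hneg : ∀ s, 0 < s → s < sstar → Phif N m s < 0 := by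
    intro s hs hss
    rcases lt_or_ge s (1/N) with h | h
    · exact Phif_neg_small N hNpos m hm2 hmeven s hs h
    · have := Phif_mono N hNpos m hm2 (Set.mem_Ici.mpr h) (Set.mem_Ici.mpr hs1.le) hss
      rw [hs0] at this
      exact this
  have hpos : ∀ s, sstar < s → 0 < Phif N m s := by
    intro s hss
    have := Phif_mono N hNpos m hm2 (Set.mem_Ici.mpr hs1.le)
      (Set.mem_Ici.mpr (le_of_lt (lt_trans hs1 hss))) hss
    rw [hs0] at this
    exact this
  -- derivative signs
  have hDneg : ∀ s ∈ Set.Ioo (0:ℝ) sstar, Df N m s < 0 := by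
    intro s hsio
    have h3 := Qf_key3 N m hmodd s
    have hphi := hneg s hsio.1 hsio.2
    nlinarith [sq_nonneg s, hsio.1, mul_pos hsio.1 hsio.1]
  have hDpos : ∀ s ∈ Set.Ioi sstar, 0 < Df N m s := by
    intro s hsio
    have hsio' : sstar < s := hsio
    have h3 := Qf_key3 N m hmodd s
    have hphi := hpos s hsio'
    have hsp : 0 < s := lt_trans hspos hsio'
    nlinarith [mul_pos hsp hsp]
  -- monotonicity of Qf
  have hanti : StrictAntiOn (Qf N m) (Set.Icc 0 sstar) := by
    apply strictAntiOn_of_deriv_neg (convex_Icc 0 sstar) (Qf_cont N m).continuousOn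
    intro s hsio
    rw [interior_Icc] at hsio
    rw [(Qf_hasDeriv N m s).deriv]
    exact hDneg s hsio
  have hmono : StrictMonoOn (Qf N m) (Set.Ici sstar) := by
    apply strictMonoOn_of_deriv_pos (convex_Ici sstar) (Qf_cont N m).continuousOn
    intro s hsio
    rw [interior_Ici] at hsio
    rw [(Qf_hasDeriv N m s).deriv]
    exact hDpos s hsio
  -- value at 1/n
  have hnne : (n:ℝ) ≠ 0 := ne_of_gt hnpos
  have hval3 : Phif N m (1/(n:ℝ)) = ((m*(n+1)+n : ℕ) : ℝ) / (n:ℝ)^(m+1) - 1 := by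
    rw [Phif, hNdef]
    rw [show ((n:ℝ)+1)*(1/(n:ℝ)) - 1 = 1/(n:ℝ) by field_simp; ring]
    push_cast
    rw [div_pow, one_pow]
    field_simp
    ring
  have hnat_le := aux_nat_le m hm2 n hn
  have hnpow : (0:ℝ) < (n:ℝ)^(m+1) := by positivity
  have hval3_le : Phif N m (1/(n:ℝ)) ≤ 0 := by
    rw [hval3]
    have : ((m*(n+1)+n : ℕ) : ℝ) ≤ (n:ℝ)^(m+1) := by exact_mod_cast hnat_le
    rw [sub_nonpos, div_le_one hnpow]
    exact this
  have h1nmem : (1/(n:ℝ)) ∈ Set.Ici (1/N) := by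
    rw [Set.mem_Ici, hNdef, div_le_div_iff₀ (by linarith) hnpos]
    nlinarith
  -- lower bound
  have hlow : 1/(n:ℝ) ≤ sstar := by
    by_contra hcon
    push_neg at hcon
    have := Phif_mono N hNpos m hm2 (Set.mem_Ici.mpr hs1.le) h1nmem hcon
    rw [hs0] at this
    linarith
  refine ⟨sstar, ⟨hlow, hs2⟩, ?_, ?_, ?_⟩
  · rw [hpq]; exact hanti
  · rw [hpq]; exact hmono
  · constructor
    · intro heq
      have h0 : Phif N m (1/(n:ℝ)) = 0 := heq ▸ hs0
      rw [hval3] at h0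
      have hcast : ((m*(n+1)+n : ℕ) : ℝ) = (n:ℝ)^(m+1) := by
        field_simp at h0
        push_cast at h0 ⊢
        linarith
      have hnat : m*(n+1)+n = n^(m+1) := by exact_mod_cast hcast
      obtain ⟨hn2', hm2'⟩ := aux_nat_eq n m hn hm2 hnat
      exact ⟨hn2', by omega⟩
    · rintro ⟨hn2', hd4⟩
      have hm2' : m = 2 := by omega
      have hnat : ((m*(n+1)+n : ℕ) : ℝ) = (n:ℝ)^(m+1) := by
        have : m*(n+1)+n = n^(m+1) := by rw [hm2', hn2']; norm_num
        exact_mod_cast this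
      have h0 : Phif N m (1/(n:ℝ)) = 0 := by
        rw [hval3, hnat]
        field_simp; norm_num
      exact (Phif_mono N hNpos m hm2).injOn (Set.mem_Ici.mpr hs1.le) h1nmem
        (by rw [hs0, h0])
end

section
/- Let n ≥ 2 and d ≥ 3 odd. Then s ∈ Δ_{n−1} satisfies h(s) = 0 (where h(s)_k = s_k·(g(1−Σ_{j<n} s_j) + Σ_{j<n} g(s_j)) − g(s_k)) if and only if, with s_n := 1 − Σ_{k=1}^{n−1} s_k, there is a nonempty K ⊆ {1,...,n} with s_k = 1/|K| for k ∈ K and s_k = 0 for k ∉ K. -/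
private lemma tangent_pos (e : ℕ) (he2 : 2 ≤ e) (hee : Even e) {u : ℝ} (hu : 0 < u) (v : ℝ) :
    u ^ e + (e : ℝ) * u ^ (e - 1) * (v - u) ≤ v ^ e := by
  have hue : u ^ (e - 1) * u = u ^ e := by
    rw [← pow_succ]; congr 1; omega
  rcases le_or_gt (-u) v with hv | hv
  · have ha : (-2 : ℝ) ≤ v / u - 1 := by
      rw [le_sub_iff_add_le, show (-2:ℝ)+1 = -1 by norm_num, le_div_iff₀ hu]
      linarith
    have hb := one_add_mul_le_pow ha e
    have h1 : (1 : ℝ) + (v / u - 1) = v / u := by ring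
    rw [h1] at hb
    have hb2 := mul_le_mul_of_nonneg_right hb (pow_pos hu e).le
    have h2 : (v / u) ^ e * u ^ e = v ^ e := by
      rw [div_pow, div_mul_cancel₀]
      exact pow_ne_zero _ hu.ne'
    rw [h2] at hb2
    have h3 : (1 + (e : ℝ) * (v / u - 1)) * u ^ e = u ^ e + (e : ℝ) * u ^ (e - 1) * (v - u) := by
      rw [← hue]; field_simp
    linarith [h3 ▸ hb2]
  · have hlt : u ^ e < v ^ e := by
      have := pow_lt_pow_left₀ (show u < -v by linarith) hu.le (by omega : e ≠ 0)
      rwa [Even.neg_pow hee] at this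
    have hterm : (e : ℝ) * u ^ (e - 1) * (v - u) ≤ 0 := by
      apply mul_nonpos_of_nonneg_of_nonpos
      · positivity
      · linarith
    linarith

private lemma tangent (e : ℕ) (he2 : 2 ≤ e) (hee : Even e) (u v : ℝ) :
    u ^ e + (e : ℝ) * u ^ (e - 1) * (v - u) ≤ v ^ e := by
  have hodd : Odd (e - 1) := Nat.Even.sub_odd (by omega) hee odd_one
  rcases lt_trichotomy u 0 with hu | hu | hu
  · have := tangent_pos e he2 hee (u := -u) (by linarith) (-v)
    rw [Even.neg_pow hee, Even.neg_pow hee, Odd.neg_pow hodd] at this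
    nlinarith [this]
  · subst hu
    simp only [zero_pow (by omega : e ≠ 0), zero_pow (by omega : e - 1 ≠ 0)]
    simpa using hee.pow_nonneg v
  · exact tangent_pos e he2 hee hu v


private lemma npos (e : ℕ) (he2 : 2 ≤ e) (hee : Even e) {u : ℝ} (hu : -1 < u) :
    0 < ((e : ℝ) - 1) * u ^ e + (e : ℝ) * u ^ (e - 1) + 1 := by
  have hodd : Odd (e - 1) := Nat.Even.sub_odd (by omega) hee odd_one
  have hecast : (2 : ℝ) ≤ (e : ℝ) := by exact_mod_cast he2
  rcases le_or_gt 0 u with hu0 | hu0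
  · nlinarith [pow_nonneg hu0 e, pow_nonneg hu0 (e - 1)]
  · set v : ℝ := -u with hv_def
    have hv0 : 0 < v := by simp [hv_def]; linarith
    have hv1 : v < 1 := by simp [hv_def]; linarith
    have hue : u ^ e = v ^ e := by rw [hv_def, Even.neg_pow hee]
    have hue1 : u ^ (e - 1) = -v ^ (e - 1) := by rw [hv_def, Odd.neg_pow hodd, neg_neg]
    rw [hue, hue1]
    -- goal: 0 < (e-1) * v^e - e * v^(e-1) + 1
    have hgeom : (1 - v) * (∑ i ∈ Finset.range (e - 1), v ^ i) = 1 - v ^ (e - 1) := by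
      linear_combination (-1 : ℝ) * geom_sum_mul v (e - 1)
    have hS : ((e : ℝ) - 1) * v ^ (e - 2) ≤ ∑ i ∈ Finset.range (e - 1), v ^ i := by
      have := Finset.card_nsmul_le_sum (Finset.range (e - 1)) (fun i => v ^ i) (v ^ (e - 2))
        (fun i hi => pow_le_pow_of_le_one hv0.le hv1.le
          (by simp [Finset.mem_range] at hi; omega))
      simpa [nsmul_eq_mul, Nat.cast_sub (by omega : 1 ≤ e)] using this
    have hchain : (1 - v) * (((e : ℝ) - 1) * v ^ (e - 2)) ≤ 1 - v ^ (e - 1) := by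
      rw [← hgeom]
      exact mul_le_mul_of_nonneg_left hS (by linarith)
    have hp1 : v ^ (e - 1) = v ^ (e - 2) * v := by rw [← pow_succ]; congr 1; omega
    have hp2 : v ^ e = v ^ (e - 2) * v * v := by rw [← pow_succ, ← pow_succ]; congr 1; omega
    have hw : 0 < v ^ (e - 2) := pow_pos hv0 _
    have hstrict : 0 < ((e : ℝ) - 1) * v ^ (e - 2) * (1 - v) ^ 2 :=
      mul_pos (mul_pos (by linarith) hw) (pow_pos (by linarith) 2)
    rw [hp1, hp2]
    rw [hp1] at hchain
    nlinarith [hchain, hstrict]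

private lemma keylem (e : ℕ) (he2 : 2 ≤ e) (hee : Even e) {u v : ℝ} (hu : -1 < u)
    (huv : u < v) : (v + 1) * u ^ e + (u - v) < (u + 1) * v ^ e := by
  have htan := tangent e he2 hee u v
  have hN := npos e he2 hee hu
  have hup : u ^ (e - 1) * u = u ^ e := by rw [← pow_succ]; congr 1; omega
  have h1 : 0 ≤ (u + 1) * (v ^ e - (u ^ e + (e : ℝ) * u ^ (e - 1) * (v - u))) :=
    mul_nonneg (by linarith) (by linarith)
  have h2 : 0 < (v - u) * (((e : ℝ) - 1) * u ^ e + (e : ℝ) * u ^ (e - 1) + 1) :=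
    mul_pos (by linarith) hN
  rw [← hup] at h1 h2 ⊢
  nlinarith [h1, h2]


private lemma glt (n d : ℕ) (hd : 3 ≤ d) (hdodd : Odd d) (g : ℝ → ℝ)
    (hg : ∀ s, g s = (((n : ℝ) + 1) * s - 1) ^ (d - 1) - 1)
    {a b : ℝ} (ha : 0 < a) (hab : a < b) : b * g a < a * g b := by
  have he2 : 2 ≤ d - 1 := by omega
  have hee : Even (d - 1) := Nat.Odd.sub_odd hdodd odd_one
  have hn1 : (0 : ℝ) < (n : ℝ) + 1 := by positivity
  rw [hg a, hg b]
  set u : ℝ := ((n : ℝ) + 1) * a - 1 with hu_def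
  set v : ℝ := ((n : ℝ) + 1) * b - 1 with hv_def
  have hu : -1 < u := by have : 0 < ((n : ℝ) + 1) * a := mul_pos hn1 ha; simp [hu_def]; linarith
  have huv : u < v := by simp only [hu_def, hv_def]; nlinarith
  have key := keylem (d - 1) he2 hee hu huv
  have h3 : ((n : ℝ) + 1) * (b * (u ^ (d - 1) - 1)) < ((n : ℝ) + 1) * (a * (v ^ (d - 1) - 1)) := by
    have h4 : v + 1 = ((n : ℝ) + 1) * b := by rw [hv_def]; ring
    have h5 : u + 1 = ((n : ℝ) + 1) * a := by rw [hu_def]; ring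
    have h6 : u - v = ((n : ℝ) + 1) * (a - b) := by rw [hu_def, hv_def]; ring
    rw [h4, h5, h6] at key
    nlinarith [key]
  exact (mul_lt_mul_iff_right₀ hn1).mp h3

private lemma ginj (n d : ℕ) (hd : 3 ≤ d) (hdodd : Odd d) (g : ℝ → ℝ)
    (hg : ∀ s, g s = (((n : ℝ) + 1) * s - 1) ^ (d - 1) - 1)
    {a b : ℝ} (ha : 0 < a) (hb : 0 < b) (hab : b * g a = a * g b) : a = b := by
  rcases lt_trichotomy a b with hlt | heq | hlt
  · exact absurd hab (ne_of_lt (glt n d hd hdodd g hg ha hlt))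
  · exact heq
  · exact absurd hab.symm (ne_of_lt (glt n d hd hdodd g hg hb hlt))


theorem stmt_12 (n d : ℕ) (hn : 2 ≤ n) (hd : 3 ≤ d) (hdodd : Odd d)
    (g : ℝ → ℝ)
    (hg : ∀ s, g s = (((n : ℝ) + 1) * s - 1) ^ (d - 1) - 1)
    (h : (Fin (n - 1) → ℝ) → Fin (n - 1) → ℝ)
    (hh : ∀ s k, h s k = s k * (g (1 - ∑ j, s j) + ∑ j, g (s j)) - g (s k))
    (s : Fin (n - 1) → ℝ) (hs0 : ∀ k, 0 ≤ s k) (hs1 : ∑ j, s j ≤ 1) :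
    h s = 0 ↔
      ∃ K : Finset (Fin n), K.Nonempty ∧
        (∀ j : Fin (n - 1), s j =
          if Fin.castLE (Nat.sub_le n 1) j ∈ K then 1 / (K.card : ℝ) else 0) ∧
        ((1 - ∑ j, s j) =
          if (⟨n - 1, by omega⟩ : Fin n) ∈ K then 1 / (K.card : ℝ) else 0) := by
  classical
  have hee : Even (d - 1) := Nat.Odd.sub_odd hdodd odd_one
  have hg0 : g 0 = 0 := by
    rw [hg, show ((n : ℝ) + 1) * 0 - 1 = -1 by ring, Even.neg_one_pow hee]; ring
  set lastEl : Fin n := ⟨n - 1, by omega⟩ with hlast_def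
  set emb : Fin (n - 1) ↪ Fin n :=
    ⟨Fin.castLE (Nat.sub_le n 1), Fin.castLE_injective _⟩ with hemb_def
  constructor
  · -- forward direction
    intro heq
    have hk : ∀ k, s k * (g (1 - ∑ j, s j) + ∑ j, g (s j)) = g (s k) := by
      intro k
      have h0 := congrFun heq k
      rw [hh, Pi.zero_apply, sub_eq_zero] at h0
      exact h0
    set T : ℝ := g (1 - ∑ j, s j) + ∑ j, g (s j) with hT_def
    have hr0 : 0 ≤ 1 - ∑ j, s j := by linarith
    have hrT : (1 - ∑ j, s j) * T = g (1 - ∑ j, s j) := by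
      have hsum2 : (∑ j, s j) * T = ∑ j, g (s j) := by
        rw [Finset.sum_mul]
        exact Finset.sum_congr rfl fun j _ => hk j
      have hTT : T = g (1 - ∑ j, s j) + (∑ j, s j) * T := by rw [hsum2]
      linear_combination hTT
    have hpair : ∀ a b : ℝ, 0 < a → 0 < b → a * T = g a → b * T = g b → a = b := by
      intro a b ha hb hga hgb
      exact ginj n d hd hdodd g hg ha hb (by rw [← hga, ← hgb]; ring)
    set P : Finset (Fin (n - 1)) := Finset.univ.filter (fun j => 0 < s j) with hP_def
    have hmemP : ∀ j, j ∈ P ↔ 0 < s j := by intro j; simp [hP_def]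
    have hzero : ∀ j, j ∉ P → s j = 0 := by
      intro j hj
      have := (hmemP j).not.mp hj
      have := hs0 j
      linarith [not_lt.mp ‹¬ 0 < s j›]
    have hsum_eq : ∀ c : ℝ, (∀ j ∈ P, s j = c) → ∑ j, s j = P.card * c := by
      intro c hc
      have h1 : ∑ j ∈ P, s j = ∑ j, s j := by
        rw [hP_def]
        exact Finset.sum_filter_of_ne (fun x _ hx => lt_of_le_of_ne (hs0 x) (Ne.symm hx))
      rw [← h1, Finset.sum_congr rfl hc, Finset.sum_const, nsmul_eq_mul]
    have hlast_notmem : ∀ Q : Finset (Fin (n - 1)), lastEl ∉ Q.map emb := by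
      intro Q hmem
      rw [Finset.mem_map] at hmem
      obtain ⟨j, _, hj⟩ := hmem
      have : (j : ℕ) = n - 1 := congrArg Fin.val hj
      omega
    have hmem_map : ∀ (Q : Finset (Fin (n - 1))) (j : Fin (n - 1)),
        Fin.castLE (Nat.sub_le n 1) j ∈ Q.map emb ↔ j ∈ Q := by
      intro Q j
      exact Finset.mem_map' emb
    rcases eq_or_lt_of_le hr0 with hr | hr
    · -- r = 0
      have hs1' : ∑ j, s j = 1 := by linarith
      have hPne : P.Nonempty := by
        rw [Finset.nonempty_iff_ne_empty]
        intro hPe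
        have : ∑ j, s j = 0 := Finset.sum_eq_zero fun j _ => hzero j (by simp [hPe])
        linarith
      obtain ⟨j0, hj0⟩ := hPne
      have hc : 0 < s j0 := (hmemP j0).mp hj0
      have hjc : ∀ j ∈ P, s j = s j0 := fun j hj =>
        hpair _ _ ((hmemP j).mp hj) hc (hk j) (hk j0)
      have hsum : ∑ j, s j = P.card * s j0 := hsum_eq _ hjc
      have hcard_pos : 0 < P.card := Finset.card_pos.mpr ⟨j0, hj0⟩
      have hcval : s j0 = 1 / ((P.card : ℝ)) := by
        rw [eq_div_iff (by exact_mod_cast hcard_pos.ne')]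
        rw [hs1'] at hsum
        linarith
      refine ⟨P.map emb, Finset.map_nonempty.mpr ⟨j0, hj0⟩, ?_, ?_⟩
      · intro j
        rw [Finset.card_map]
        by_cases hj : j ∈ P
        · rw [if_pos ((hmem_map P j).mpr hj), hjc j hj, hcval]
        · rw [if_neg (fun hc' => hj ((hmem_map P j).mp hc'))]
          exact hzero j hj
      · rw [if_neg (hlast_notmem P)]
        linarith
    · -- r > 0
      have hjr : ∀ j ∈ P, s j = 1 - ∑ j', s j' := fun j hj =>
        hpair _ _ ((hmemP j).mp hj) hr (hk j) hrT
      have hsum : ∑ j, s j = P.card * (1 - ∑ j', s j') := hsum_eq _ hjr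
      have hcard : (insert lastEl (P.map emb)).card = P.card + 1 := by
        rw [Finset.card_insert_of_notMem (hlast_notmem P), Finset.card_map]
      have hrval : 1 - ∑ j', s j' = 1 / ((P.card : ℝ) + 1) := by
        rw [eq_div_iff (Nat.cast_add_one_ne_zero P.card)]
        nlinarith [hsum]
      refine ⟨insert lastEl (P.map emb), ⟨lastEl, Finset.mem_insert_self _ _⟩, ?_, ?_⟩
      · intro j
        rw [hcard]
        by_cases hj : j ∈ P
        · rw [if_pos (Finset.mem_insert_of_mem ((hmem_map P j).mpr hj)), hjr j hj, hrval]
          push_cast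
          ring
        · rw [if_neg]
          · exact hzero j hj
          · intro hc'
            rcases Finset.mem_insert.mp hc' with hc1 | hc2
            · have : (j : ℕ) = n - 1 := congrArg Fin.val hc1
              have := j.isLt
              omega
            · exact hj ((hmem_map P j).mp hc2)
      · rw [if_pos (Finset.mem_insert_self _ _), hcard, hrval]
        push_cast
        ring
  · -- backward direction
    rintro ⟨K, hKne, hK1, hK2⟩
    set c : ℝ := 1 / (K.card : ℝ) with hc_def
    have hKcard : 0 < K.card := Finset.card_pos.mpr hKne
    -- card identity
    have e1 : (Finset.univ.filter (fun j : Fin (n - 1) =>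
        Fin.castLE (Nat.sub_le n 1) j ∈ K)).card = (K.filter (fun i : Fin n => (i : ℕ) < n - 1)).card := by
      apply Finset.card_bij (fun (j : Fin (n - 1)) _ => Fin.castLE (Nat.sub_le n 1) j)
      · intro a ha
        simp only [Finset.mem_filter, Finset.mem_univ, true_and] at ha ⊢
        exact ⟨ha, a.isLt⟩
      · intro a _ b _ hab
        exact Fin.castLE_injective _ hab
      · intro i hi
        simp only [Finset.mem_filter] at hi
        refine ⟨⟨(i : ℕ), hi.2⟩, ?_, ?_⟩
        · simp only [Finset.mem_filter, Finset.mem_univ, true_and]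
          have : Fin.castLE (Nat.sub_le n 1) ⟨(i : ℕ), hi.2⟩ = i := by
            apply Fin.ext; rfl
          rw [this]
          exact hi.1
        · apply Fin.ext; rfl
    have e2 : K.filter (fun i : Fin n => ¬((i : ℕ) < n - 1)) =
        if lastEl ∈ K then ({lastEl} : Finset (Fin n)) else ∅ := by
      split_ifs with hl
      · ext i
        simp only [Finset.mem_filter, Finset.mem_singleton]
        constructor
        · rintro ⟨hiK, hilt⟩
          have := i.isLt
          apply Fin.ext
          show (i : ℕ) = n - 1
          omega
        · rintro rfl
          exact ⟨hl, by show ¬(n - 1 < n - 1); omega⟩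
      · ext i
        simp only [Finset.mem_filter, Finset.notMem_empty, iff_false, not_and]
        intro hiK hilt
        have := i.isLt
        have : i = lastEl := by apply Fin.ext; show (i : ℕ) = n - 1; omega
        exact hilt (by rw [this] at hiK; exact absurd hiK hl)
    have e3 := Finset.card_filter_add_card_filter_not
      (s := K) (p := fun i : Fin n => (i : ℕ) < n - 1)
    rw [e2] at e3
    -- T computation
    have hsum_g : ∑ j, g (s j) = ((Finset.univ.filter (fun j : Fin (n - 1) =>
        Fin.castLE (Nat.sub_le n 1) j ∈ K)).card : ℝ) * g c := by
      have hterm : ∀ j : Fin (n - 1), g (s j) =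
          (if Fin.castLE (Nat.sub_le n 1) j ∈ K then (1 : ℝ) else 0) * g c := by
        intro j
        rw [hK1 j]
        by_cases hj : Fin.castLE (Nat.sub_le n 1) j ∈ K <;> simp [hj, hg0, hc_def]
      rw [Finset.sum_congr rfl fun j _ => hterm j, ← Finset.sum_mul, Finset.sum_boole]
    have hlast_g : g (1 - ∑ j, s j) = (if lastEl ∈ K then (1 : ℝ) else 0) * g c := by
      rw [hK2]
      by_cases hl : lastEl ∈ K <;> simp [hl, hg0, hc_def]
    have hT : g (1 - ∑ j, s j) + ∑ j, g (s j) = (K.card : ℝ) * g c := by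
      rw [hsum_g, hlast_g]
      split_ifs at e3 ⊢ with hl
      · simp only [Finset.card_singleton] at e3
        have : ((Finset.univ.filter (fun j : Fin (n - 1) =>
            Fin.castLE (Nat.sub_le n 1) j ∈ K)).card : ℝ) = (K.card : ℝ) - 1 := by
          rw [e1]
          have : (K.filter (fun i : Fin n => (i : ℕ) < n - 1)).card + 1 = K.card := e3
          push_cast [← this]
          ring
        rw [this]
        ring
      · simp only [Finset.card_empty, add_zero] at e3
        rw [e1, e3]
        ring
    -- conclude
    funext k
    rw [hh, hT, Pi.zero_apply, hK1 k]
    by_cases hk : Fin.castLE (Nat.sub_le n 1) k ∈ K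
    · rw [if_pos hk]
      have hKne' : ((K.card : ℝ)) ≠ 0 := by exact_mod_cast hKcard.ne'
      rw [hc_def]
      field_simp
      ring
    · rw [if_neg hk, hg0]
      ring
end

section
/- Let d ≥ 2 be even, g(s) = (3s−1)^{d−1} + 1, and h(s) = (1−s)g(s) − s·g(1−s). Then h admits the factorization h(s) = −9s(s−1)(2s−1)(3s−1)(3s−2)·Σ_{p,q ≥ 0, p+q ≤ d/2−3} (3s−1)^{2p}(3s−2)^{2q}. In particular, h is identically zero if d ∈ {2,4}, and for even d ≥ 6 the real zeros of h are exactly {0, 1/3, 1/2, 2/3, 1}. -/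
-- telescoping triangle lemma
lemma filter_eq_image (R k : ℕ) (hk : k < R) :
    (Finset.range R ×ˢ Finset.range R).filter (fun pq => pq.1 + pq.2 = k)
      = (Finset.range (k+1)).image (fun p => (p, k - p)) := by
  ext ⟨p, q⟩
  simp only [Finset.mem_filter, Finset.mem_product, Finset.mem_image, Finset.mem_range,
    Prod.mk.injEq]
  constructor
  · rintro ⟨⟨hp, hq⟩, hpq⟩; exact ⟨p, by omega, rfl, by omega⟩
  · rintro ⟨a, ha, rfl, rfl⟩; omega

lemma tri (x y : ℝ) (R : ℕ) (n : ℕ) (h : n < R) :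
    (x - y) * ∑ pq ∈ (Finset.range R ×ˢ Finset.range R).filter
        (fun pq => pq.1 + pq.2 ≤ n), x ^ pq.1 * y ^ pq.2
    = ∑ j ∈ Finset.range (n+1), (x^(j+1) - y^(j+1)) := by
  induction n with
  | zero =>
    have : (Finset.range R ×ˢ Finset.range R).filter (fun pq => pq.1 + pq.2 ≤ 0)
        = {(0,0)} := by
      ext ⟨p, q⟩
      simp only [Finset.mem_filter, Finset.mem_product, Finset.mem_range, Finset.mem_singleton,
        Prod.mk.injEq]
      omega
    rw [this]
    simp
  | succ m ih =>
    have hsplit : (Finset.range R ×ˢ Finset.range R).filter (fun pq => pq.1 + pq.2 ≤ m+1)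
        = (Finset.range R ×ˢ Finset.range R).filter (fun pq => pq.1 + pq.2 ≤ m)
          ∪ (Finset.range R ×ˢ Finset.range R).filter (fun pq => pq.1 + pq.2 = m+1) := by
      ext ⟨p, q⟩
      simp only [Finset.mem_filter, Finset.mem_product, Finset.mem_range, Finset.mem_union]
      omega
    have hdisj : Disjoint
        ((Finset.range R ×ˢ Finset.range R).filter (fun pq => pq.1 + pq.2 ≤ m))
        ((Finset.range R ×ˢ Finset.range R).filter (fun pq => pq.1 + pq.2 = m+1)) := by
      rw [Finset.disjoint_left]
      rintro ⟨p, q⟩ h1 h2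
      simp only [Finset.mem_filter, Finset.mem_product, Finset.mem_range] at h1 h2
      omega
    have hkey : (x - y) * ∑ pq ∈ (Finset.range R ×ˢ Finset.range R).filter
        (fun pq => pq.1 + pq.2 = m+1), x ^ pq.1 * y ^ pq.2 = x^(m+2) - y^(m+2) := by
      rw [filter_eq_image R (m+1) h,
        Finset.sum_image (by intro a _ b _ hab; exact (Prod.mk.injEq _ _ _ _ ▸ hab).1)]
      have hcongr : (∑ i ∈ Finset.range (m+2), x^i * y^(m+2-1-i))
          = ∑ p ∈ Finset.range (m+2), x^p * y^(m+1-p) := by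
        apply Finset.sum_congr rfl
        intro i _
        rw [show m+2-1-i = m+1-i by omega]
      have hg2 := geom_sum₂_mul x y (m+2)
      rw [hcongr] at hg2
      linear_combination hg2
    rw [hsplit, Finset.sum_union hdisj, mul_add, ih (by omega), hkey]
    have hlast := Finset.sum_range_succ (fun j => x^(j+1) - y^(j+1)) (m+1)
    linear_combination -hlast

lemma master (x y : ℝ) (R n : ℕ) (h : n < R) :
    (x - 1) * (y - 1) * ((x - y) * ∑ pq ∈ (Finset.range R ×ˢ Finset.range R).filter
        (fun pq => pq.1 + pq.2 ≤ n), x ^ pq.1 * y ^ pq.2)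
    = (y - 1) * (x^(n+2) - x) - (x - 1) * (y^(n+2) - y) := by
  have h1 := tri x y R n h
  rw [h1, Finset.sum_sub_distrib]
  have hx : (x - 1) * ∑ j ∈ Finset.range (n+1), x^(j+1) = x^(n+2) - x := by
    have hgx := geom_sum_mul x (n+1)
    have : (∑ j ∈ Finset.range (n+1), x^(j+1)) = x * ∑ j ∈ Finset.range (n+1), x^j := by
      rw [Finset.mul_sum]
      exact Finset.sum_congr rfl (fun j _ => by ring)
    rw [this]
    linear_combination x * hgx
  have hy : (y - 1) * ∑ j ∈ Finset.range (n+1), y^(j+1) = y^(n+2) - y := by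
    have hgy := geom_sum_mul y (n+1)
    have : (∑ j ∈ Finset.range (n+1), y^(j+1)) = y * ∑ j ∈ Finset.range (n+1), y^j := by
      rw [Finset.mul_sum]
      exact Finset.sum_congr rfl (fun j _ => by ring)
    rw [this]
    linear_combination y * hgy
  linear_combination (y-1) * hx - (x-1) * hy

theorem stmt_14 (d : ℕ) (hd : 2 ≤ d) (hdeven : Even d)
    (g : ℝ → ℝ) (hg : ∀ s, g s = (3 * s - 1) ^ (d - 1) + 1)
    (h : ℝ → ℝ) (hh : ∀ s, h s = (1 - s) * g s - s * g (1 - s)) :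
    (∀ s : ℝ, h s =
      -9 * s * (s - 1) * (2 * s - 1) * (3 * s - 1) * (3 * s - 2) *
        ∑ pq ∈ (Finset.range d ×ˢ Finset.range d).filter
            (fun pq => (pq.1 : ℤ) + pq.2 ≤ (d : ℤ) / 2 - 3),
          (3 * s - 1) ^ (2 * pq.1) * (3 * s - 2) ^ (2 * pq.2)) ∧
    (d = 2 ∨ d = 4 → ∀ s, h s = 0) ∧
    (6 ≤ d → ∀ s : ℝ, h s = 0 ↔
      s = 0 ∨ s = 1 / 3 ∨ s = 1 / 2 ∨ s = 2 / 3 ∨ s = 1) := by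
  obtain ⟨r, hr⟩ := hdeven
  have hmain : ∀ s : ℝ, h s =
      -9 * s * (s - 1) * (2 * s - 1) * (3 * s - 1) * (3 * s - 2) *
        ∑ pq ∈ (Finset.range d ×ˢ Finset.range d).filter
            (fun pq => (pq.1 : ℤ) + pq.2 ≤ (d : ℤ) / 2 - 3),
          (3 * s - 1) ^ (2 * pq.1) * (3 * s - 2) ^ (2 * pq.2) := by
    intro s
    by_cases hd6 : 6 ≤ d
    · -- large case
      obtain ⟨k, hk⟩ : ∃ k, d = 2*k+6 := ⟨r - 3, by omega⟩
      subst hk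
      have hfil : ((Finset.range (2*k+6) ×ˢ Finset.range (2*k+6)).filter
            (fun pq => (pq.1 : ℤ) + pq.2 ≤ ((2*k+6 : ℕ) : ℤ) / 2 - 3))
          = ((Finset.range (2*k+6) ×ˢ Finset.range (2*k+6)).filter
            (fun pq => pq.1 + pq.2 ≤ k)) := by
        apply Finset.filter_congr
        intro pq _
        constructor <;> intro h' <;> omega
      rw [hfil]
      have hsum : (∑ pq ∈ (Finset.range (2*k+6) ×ˢ Finset.range (2*k+6)).filter
            (fun pq => pq.1 + pq.2 ≤ k),
            (3 * s - 1) ^ (2 * pq.1) * (3 * s - 2) ^ (2 * pq.2))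
          = ∑ pq ∈ (Finset.range (2*k+6) ×ˢ Finset.range (2*k+6)).filter
            (fun pq => pq.1 + pq.2 ≤ k),
            ((3 * s - 1)^2) ^ pq.1 * ((3 * s - 2)^2) ^ pq.2 :=
        Finset.sum_congr rfl (fun pq _ => by rw [pow_mul, pow_mul])
      rw [hsum]
      have hM := master ((3*s-1)^2) ((3*s-2)^2) (2*k+6) k (by omega)
      rw [← pow_mul, ← pow_mul] at hM
      rw [hh, hg, hg, show (2*k+6-1) = 2*(k+2)+1 by omega,
        show (3*(1-s)-1 : ℝ) = -(3*s-2) by ring,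
        Odd.neg_pow ⟨k+2, rfl⟩]
      linear_combination (1/3 : ℝ) * hM
    · -- small case : sum is empty and h = 0
      have hfil : ((Finset.range d ×ˢ Finset.range d).filter
            (fun pq => (pq.1 : ℤ) + pq.2 ≤ (d : ℤ) / 2 - 3)) = ∅ := by
        apply Finset.filter_eq_empty_iff.mpr
        intro pq _
        omega
      rw [hfil, Finset.sum_empty, mul_zero]
      have : d = 2 ∨ d = 4 := by omega
      rcases this with h2 | h2 <;> subst h2 <;> rw [hh, hg, hg] <;> norm_num <;> ring
  refine ⟨hmain, ?_, ?_⟩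
  · intro hcase s
    have : ¬ 6 ≤ d := by omega
    have hfil : ((Finset.range d ×ˢ Finset.range d).filter
          (fun pq => (pq.1 : ℤ) + pq.2 ≤ (d : ℤ) / 2 - 3)) = ∅ := by
      apply Finset.filter_eq_empty_iff.mpr
      intro pq _
      omega
    rw [hmain s, hfil, Finset.sum_empty, mul_zero]
  · intro hd6 s
    have hS : (1:ℝ) ≤ ∑ pq ∈ (Finset.range d ×ˢ Finset.range d).filter
          (fun pq => (pq.1 : ℤ) + pq.2 ≤ (d : ℤ) / 2 - 3),
        (3 * s - 1) ^ (2 * pq.1) * (3 * s - 2) ^ (2 * pq.2) := by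
      have hmem : ((0,0) : ℕ × ℕ) ∈ (Finset.range d ×ˢ Finset.range d).filter
          (fun pq => (pq.1 : ℤ) + pq.2 ≤ (d : ℤ) / 2 - 3) := by
        simp only [Finset.mem_filter, Finset.mem_product, Finset.mem_range]
        constructor
        · omega
        · push_cast; omega
      calc (1:ℝ) = (3 * s - 1) ^ (2 * (0:ℕ)) * (3 * s - 2) ^ (2 * (0:ℕ)) := by norm_num
        _ ≤ _ := Finset.single_le_sum
            (f := fun pq : ℕ × ℕ => (3 * s - 1) ^ (2 * pq.1) * (3 * s - 2) ^ (2 * pq.2))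
            (fun pq _ => by simp only [pow_mul]; positivity) hmem
    rw [hmain s]
    set S := ∑ pq ∈ (Finset.range d ×ˢ Finset.range d).filter
          (fun pq => (pq.1 : ℤ) + pq.2 ≤ (d : ℤ) / 2 - 3),
        (3 * s - 1) ^ (2 * pq.1) * (3 * s - 2) ^ (2 * pq.2) with hSdef
    constructor
    · intro h0
      rcases mul_eq_zero.mp h0 with hA | hS0
      · simp only [mul_eq_zero] at hA
        rcases hA with (((((h' | h') | h') | h') | h') | h')
        · norm_num at h'
        · exact Or.inl h'
        · exact Or.inr (Or.inr (Or.inr (Or.inr (by linarith))))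
        · exact Or.inr (Or.inr (Or.inl (by linarith)))
        · exact Or.inr (Or.inl (by linarith))
        · exact Or.inr (Or.inr (Or.inr (Or.inl (by linarith))))
      · linarith
    · rintro (h' | h' | h' | h' | h') <;> subst h' <;> norm_num
end

section
/- Let d ≥ 3 be odd, g(s) = (3s−1)^{d−1} − 1, and h(s) = (1−s)g(s) − s·g(1−s). Then h(s) < 0 for 0 < s < 1/2 and h(s) > 0 for 1/2 < s < 1; in particular the only zeros of h in [0,1] are 0, 1/2, and 1. -/
theorem stmt_15 (d : ℕ) (hd : 3 ≤ d) (hdodd : Odd d)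
    (g : ℝ → ℝ) (hg : ∀ s, g s = (3 * s - 1) ^ (d - 1) - 1)
    (h : ℝ → ℝ) (hh : ∀ s, h s = (1 - s) * g s - s * g (1 - s)) :
    (∀ s : ℝ, 0 < s → s < 1 / 2 → h s < 0) ∧
    (∀ s : ℝ, 1 / 2 < s → s < 1 → 0 < h s) ∧
    (∀ s : ℝ, 0 ≤ s → s ≤ 1 → (h s = 0 ↔ s = 0 ∨ s = 1 / 2 ∨ s = 1)) := by
  have hm : Even (d - 1) := Nat.Odd.sub_odd hdodd odd_one
  have hm0 : d - 1 ≠ 0 := by omega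
  have hsc : StrictConvexOn ℝ Set.univ (fun x : ℝ => x ^ (d - 1)) :=
    hm.strictConvexOn_pow hm0
  -- antisymmetry
  have hanti : ∀ s : ℝ, h (1 - s) = - h s := by
    intro s
    simp only [hh, hg]
    ring_nf
  -- main negativity on (0, 1/2)
  have hneg : ∀ s : ℝ, 0 < s → s < 1 / 2 → h s < 0 := by
    intro s hs0 hs2
    have hs1 : (1 : ℝ) - s > 0 := by linarith
    have ha : (0 : ℝ) < (1 - 2 * s) / (1 - s) := div_pos (by linarith) hs1
    have hb : (0 : ℝ) < s / (1 - s) := div_pos hs0 hs1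
    have hab : (1 - 2 * s) / (1 - s) + s / (1 - s) = 1 := by field_simp; ring
    have key := hsc.2 (Set.mem_univ (-1 : ℝ)) (Set.mem_univ (2 - 3 * s))
      (by intro he; nlinarith) ha hb hab
    simp only [smul_eq_mul] at key
    have hx : (1 - 2 * s) / (1 - s) * (-1) + s / (1 - s) * (2 - 3 * s) = 3 * s - 1 := by
      field_simp
      ring
    rw [hx] at key
    have hn1 : (-1 : ℝ) ^ (d - 1) = 1 := hm.neg_one_pow
    rw [hn1] at key
    -- key : (3s-1)^(d-1) < (1-2s)/(1-s) * 1 + s/(1-s) * (2-3s)^(d-1)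
    have key2 : (1 - s) * (3 * s - 1) ^ (d - 1) <
        (1 - 2 * s) + s * (2 - 3 * s) ^ (d - 1) := by
      have := mul_lt_mul_of_pos_left key hs1
      calc (1 - s) * (3 * s - 1) ^ (d - 1)
          < (1 - s) * ((1 - 2 * s) / (1 - s) * 1 + s / (1 - s) * (2 - 3 * s) ^ (d - 1)) := this
        _ = (1 - 2 * s) + s * (2 - 3 * s) ^ (d - 1) := by field_simp
    have hg1 : g (1 - s) = (2 - 3 * s) ^ (d - 1) - 1 := by
      rw [hg]; ring_nf
    rw [hh, hg, hg1]
    nlinarith [key2]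
  refine ⟨hneg, ?_, ?_⟩
  · intro s hs2 hs1
    have := hneg (1 - s) (by linarith) (by linarith)
    rw [hanti] at this
    linarith
  · intro s hs0 hs1
    constructor
    · intro hz
      rcases lt_trichotomy s (1 / 2) with hlt | heq | hgt
      · rcases eq_or_lt_of_le hs0 with he | hp
        · exact Or.inl he.symm
        · exact absurd hz (ne_of_lt (hneg s hp hlt))
      · exact Or.inr (Or.inl heq)
      · rcases eq_or_lt_of_le hs1 with he | hp
        · exact Or.inr (Or.inr he)
        · have := hneg (1 - s) (by linarith) (by linarith)
          rw [hanti] at this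
          exact absurd hz (ne_of_gt (by linarith))
    · rintro (rfl | rfl | rfl)
      · rw [hh, hg, hg]
        norm_num [hm.neg_one_pow]
      · have e : (1 : ℝ) - 1 / 2 = 1 / 2 := by norm_num
        rw [hh, e]; ring
      · rw [hh, hg, hg]
        norm_num [hm.neg_one_pow]
end

section
/- Let n ≥ 2, d ≥ 3 odd, and let v_1,...,v_{n+1} be the simplex frame in ℝ^n. For any nonempty K ⊆ {1,...,n+1} with |K| ≤ n, ‖Σ_{k∈K} v_k‖² = |K|(n+1−|K|)/n, and the normalized vector v = (Σ_{k∈K} v_k)/‖Σ_{k∈K} v_k‖ is an eigenvector of T = Σ_{k=1}^{n+1} v_k^{⊗d} with eigenvalue μ = ((n+1−|K|)^{d−1} − |K|^{d−1}) / (n^{d/2}(|K|(n+1−|K|))^{d/2−1}). Moreover μ = 0 if and only if 2|K| = n+1; hence if n is even all eigenvalues of such eigenvectors are nonzero. -/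
open scoped RealInnerProductSpace BigOperators

lemma inner_simplexVec (n : ℕ) (hn : 1 ≤ n) (k j : Fin (n + 1)) :
    ⟪simplexVec n k, simplexVec n j⟫ = if k = j then (1:ℝ) else -(1/(n:ℝ)) := by
  have hN : (0:ℝ) < n := by exact_mod_cast hn
  have hs0 : 0 < Real.sqrt n := Real.sqrt_pos.2 hN
  have ht0 : 0 < Real.sqrt ((n:ℝ)+1) := Real.sqrt_pos.2 (by linarith)
  have hs2 : (Real.sqrt n)^2 = n := Real.sq_sqrt hN.le
  have ht2 : (Real.sqrt ((n:ℝ)+1))^2 = (n:ℝ)+1 := Real.sq_sqrt (by linarith)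
  have ha : Real.sqrt (1 + 1/(n:ℝ)) = Real.sqrt ((n:ℝ)+1) / Real.sqrt n := by
    rw [show (1:ℝ) + 1/n = ((n:ℝ)+1)/n by field_simp, Real.sqrt_div (by linarith)]
  have hb : (n:ℝ) ^ ((3:ℝ)/2) = n * Real.sqrt n := by
    rw [show (3:ℝ)/2 = 1 + 1/2 by norm_num, Real.rpow_add hN, Real.rpow_one,
      ← Real.sqrt_eq_rpow]
  set u : EuclideanSpace ℝ (Fin n) := (WithLp.toLp 2 (fun _ => (1 : ℝ))) with hu
  have huu : ⟪u, u⟫ = (n:ℝ) := by simp [hu, PiLp.inner_apply, RCLike.inner_apply, EuclideanSpace.norm_eq, Real.sq_sqrt]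
  have hsu : ∀ i : Fin n, ⟪EuclideanSpace.single i (1:ℝ), u⟫ = 1 := by
    intro i; simp [hu, EuclideanSpace.inner_single_left]
  have hus : ∀ i : Fin n, ⟪u, EuclideanSpace.single i (1:ℝ)⟫ = 1 := by
    intro i; simp [hu, EuclideanSpace.inner_single_right]
  have hss : ∀ i i' : Fin n, ⟪EuclideanSpace.single i (1:ℝ), EuclideanSpace.single i' (1:ℝ)⟫
      = if i = i' then 1 else 0 := by
    intro i i'
    simp [EuclideanSpace.inner_single_left, EuclideanSpace.single_apply, eq_comm]
  rcases lt_or_ge (k:ℕ) n with hk | hk <;> rcases lt_or_ge (j:ℕ) n with hj | hj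
  · have hkj : (k = j) ↔ ((⟨(k:ℕ), hk⟩ : Fin n) = ⟨(j:ℕ), hj⟩) := by
      simp [Fin.ext_iff]
    rw [show simplexVec n k = Real.sqrt (1 + 1/(n:ℝ)) • EuclideanSpace.single ⟨(k:ℕ), hk⟩ 1
        - ((Real.sqrt ((n:ℝ) + 1) - 1) / (n : ℝ) ^ ((3 : ℝ) / 2)) • u from by
      rw [simplexVec, dif_pos hk]]
    rw [show simplexVec n j = Real.sqrt (1 + 1/(n:ℝ)) • EuclideanSpace.single ⟨(j:ℕ), hj⟩ 1
        - ((Real.sqrt ((n:ℝ) + 1) - 1) / (n : ℝ) ^ ((3 : ℝ) / 2)) • u from by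
      rw [simplexVec, dif_pos hj]]
    rw [inner_sub_left, inner_sub_right, inner_sub_right, real_inner_smul_left,
      real_inner_smul_left, real_inner_smul_left, real_inner_smul_left,
      real_inner_smul_right, real_inner_smul_right, real_inner_smul_right,
      real_inner_smul_right, huu, hsu, hus, hss, ha, hb]
    by_cases hc : k = j
    · rw [if_pos (hkj.mp hc), if_pos hc]
      field_simp
      linear_combination ((n:ℝ) - 1) * ht2 - (n:ℝ) * hs2
    · rw [if_neg (fun h => hc (hkj.mpr h)), if_neg hc]
      field_simp
      linear_combination hs2 - ht2
  · have hkj : ¬ (k = j) := by intro h; rw [h] at hk; omega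
    rw [show simplexVec n k = Real.sqrt (1 + 1/(n:ℝ)) • EuclideanSpace.single ⟨(k:ℕ), hk⟩ 1
        - ((Real.sqrt ((n:ℝ) + 1) - 1) / (n : ℝ) ^ ((3 : ℝ) / 2)) • u from by
      rw [simplexVec, dif_pos hk]]
    rw [show simplexVec n j = -(1 / Real.sqrt (n:ℝ)) • u from by
      rw [simplexVec, dif_neg (not_lt.2 hj)]]
    rw [inner_sub_left, real_inner_smul_left, real_inner_smul_left,
      real_inner_smul_right, real_inner_smul_right, huu, hsu, ha, hb, if_neg hkj]
    field_simp
    rw [hs2]; ring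
  · have hkj : ¬ (k = j) := by intro h; rw [h] at hk; omega
    rw [show simplexVec n j = Real.sqrt (1 + 1/(n:ℝ)) • EuclideanSpace.single ⟨(j:ℕ), hj⟩ 1
        - ((Real.sqrt ((n:ℝ) + 1) - 1) / (n : ℝ) ^ ((3 : ℝ) / 2)) • u from by
      rw [simplexVec, dif_pos hj]]
    rw [show simplexVec n k = -(1 / Real.sqrt (n:ℝ)) • u from by
      rw [simplexVec, dif_neg (not_lt.2 hk)]]
    rw [inner_sub_right, real_inner_smul_left, real_inner_smul_left,
      real_inner_smul_right, real_inner_smul_right, huu, hus, ha, hb, if_neg hkj]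
    field_simp
    rw [hs2]; ring
  · have hkj : k = j := by
      have h1 : (k:ℕ) = n := by omega
      have h2 : (j:ℕ) = n := by omega
      ext; omega
    rw [show simplexVec n k = -(1 / Real.sqrt (n:ℝ)) • u from by
      rw [simplexVec, dif_neg (not_lt.2 hk)]]
    rw [show simplexVec n j = -(1 / Real.sqrt (n:ℝ)) • u from by
      rw [simplexVec, dif_neg (not_lt.2 hj)]]
    rw [real_inner_smul_left, real_inner_smul_right, huu, if_pos hkj]
    field_simp
    exact hs2.symm

theorem stmt_16 (n d : ℕ) (hn : 2 ≤ n) (hd : 3 ≤ d) (hdodd : Odd d)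
    (K : Finset (Fin (n + 1))) (hK : K.Nonempty) (hKcard : K.card ≤ n)
    (z : EuclideanSpace ℝ (Fin n)) (hz : z = ∑ k ∈ K, simplexVec n k)
    (μ : ℝ)
    (hμ : μ = (((n : ℝ) + 1 - K.card) ^ (d - 1) - (K.card : ℝ) ^ (d - 1)) /
        ((n : ℝ) ^ ((d : ℝ) / 2) *
          ((K.card : ℝ) * ((n : ℝ) + 1 - K.card)) ^ ((d : ℝ) / 2 - 1))) :
    ‖z‖ ^ 2 = (K.card : ℝ) * ((n : ℝ) + 1 - K.card) / n ∧
    (∑ j : Fin (n + 1), ⟪‖z‖⁻¹ • z, simplexVec n j⟫ ^ (d - 1) • simplexVec n j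
        = μ • (‖z‖⁻¹ • z)) ∧
    (μ = 0 ↔ 2 * K.card = n + 1) ∧
    (Even n → μ ≠ 0) := by
  have hn1 : 1 ≤ n := by omega
  have hN : (0:ℝ) < n := by exact_mod_cast hn1
  have hm1 : 1 ≤ K.card := Finset.card_pos.2 hK
  have hM : (0:ℝ) < K.card := by exact_mod_cast hm1
  have hMleN : (K.card:ℝ) ≤ n := by exact_mod_cast hKcard
  have hA : (0:ℝ) < (n:ℝ) + 1 - K.card := by linarith
  -- generic inner product form
  have hform : ∀ k j : Fin (n+1), ⟪simplexVec n k, simplexVec n j⟫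
      = -(1/(n:ℝ)) + (if k = j then 1 + 1/(n:ℝ) else 0) := by
    intro k j
    rw [inner_simplexVec n hn1]
    by_cases h : k = j
    · rw [if_pos h, if_pos h]; ring
    · rw [if_neg h, if_neg h]; ring
  -- inner products of z with frame vectors
  have hinner : ∀ j : Fin (n+1), ⟪z, simplexVec n j⟫
      = if j ∈ K then ((n:ℝ)+1-K.card)/n else -((K.card:ℝ)/n) := by
    intro j
    rw [hz, sum_inner, Finset.sum_congr rfl (fun k _ => hform k j),
      Finset.sum_add_distrib, Finset.sum_const, Finset.sum_ite_eq' K j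
        (fun _ => 1 + 1/(n:ℝ)), nsmul_eq_mul]
    by_cases h : j ∈ K
    · rw [if_pos h, if_pos h]; field_simp; ring
    · rw [if_neg h, if_neg h]; field_simp; ring
  -- norm of z
  have hzz : ‖z‖ ^ 2 = (K.card : ℝ) * ((n : ℝ) + 1 - K.card) / n := by
    rw [← real_inner_self_eq_norm_sq]
    nth_rw 2 [hz]
    rw [inner_sum, Finset.sum_congr rfl (fun k hk => by rw [hinner k, if_pos hk]),
      Finset.sum_const, nsmul_eq_mul]
    ring
  have hP0 : 0 < ‖z‖ := by
    rcases (norm_nonneg z).lt_or_eq with h | h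
    · exact h
    · exfalso
      have : (0:ℝ) < (K.card : ℝ) * ((n : ℝ) + 1 - K.card) / n := by positivity
      rw [← hzz, ← h] at this; simp at this
  -- total sum is zero
  have hS : ∑ j : Fin (n+1), simplexVec n j = 0 := by
    have h0 : ⟪∑ j : Fin (n+1), simplexVec n j, ∑ j : Fin (n+1), simplexVec n j⟫ = (0:ℝ) := by
      rw [sum_inner]
      rw [Finset.sum_congr rfl (fun k _ => by
        rw [inner_sum, Finset.sum_congr rfl (fun j _ => hform k j),
          Finset.sum_add_distrib, Finset.sum_const, Finset.sum_ite_eq Finset.univ k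
            (fun _ => 1 + 1/(n:ℝ)), if_pos (Finset.mem_univ k), nsmul_eq_mul,
          Finset.card_univ, Fintype.card_fin])]
      rw [Finset.sum_const, nsmul_eq_mul, Finset.card_univ, Fintype.card_fin]
      push_cast
      field_simp
      ring
    exact inner_self_eq_zero.mp h0
  have hcompl : ∑ j ∈ Kᶜ, simplexVec n j = -z := by
    have h1 := Finset.sum_add_sum_compl K (simplexVec n)
    rw [hS, ← hz] at h1
    exact eq_neg_of_add_eq_zero_right h1
  have heven : Even (d - 1) := Nat.Odd.sub_odd hdodd odd_one
  -- key sum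
  have hsum : ∑ j : Fin (n+1), ⟪z, simplexVec n j⟫ ^ (d-1) • simplexVec n j
      = ((((n:ℝ)+1-K.card)/n) ^ (d-1) - ((K.card:ℝ)/n) ^ (d-1)) • z := by
    rw [← Finset.sum_add_sum_compl K]
    have e1 : ∑ j ∈ K, ⟪z, simplexVec n j⟫ ^ (d-1) • simplexVec n j
        = (((n:ℝ)+1-K.card)/n) ^ (d-1) • z := by
      rw [Finset.sum_congr rfl (fun j hj => by rw [hinner j, if_pos hj]),
        ← Finset.smul_sum, ← hz]
    have e2 : ∑ j ∈ Kᶜ, ⟪z, simplexVec n j⟫ ^ (d-1) • simplexVec n j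
        = -((((K.card:ℝ))/n) ^ (d-1) • z) := by
      rw [Finset.sum_congr rfl (fun j hj => by
        rw [hinner j, if_neg (Finset.mem_compl.mp hj),
          show (-((K.card:ℝ)/n)) ^ (d-1) = ((K.card:ℝ)/n) ^ (d-1) from heven.neg_pow _]),
        ← Finset.smul_sum, hcompl, smul_neg]
    rw [e1, e2, sub_smul]
    abel
  -- scalar identity
  have hd2 : ((d - 2 : ℕ) : ℝ) = (d:ℝ) - 2 := by
    rw [Nat.cast_sub (by omega)]; norm_num
  have hd1 : ((d - 1 : ℕ) : ℝ) = (d:ℝ) - 1 := by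
    rw [Nat.cast_sub (by omega)]; norm_num
  have hPd2 : ‖z‖ ^ (d-2) = ((K.card:ℝ)*((n:ℝ)+1-K.card)) ^ ((d:ℝ)/2 - 1)
      / (n:ℝ) ^ ((d:ℝ)/2 - 1) := by
    calc ‖z‖ ^ (d-2) = ‖z‖ ^ (((d-2:ℕ)):ℝ) := (Real.rpow_natCast _ _).symm
      _ = ‖z‖ ^ ((2:ℝ) * (((d:ℝ)-2)/2)) := by rw [hd2]; congr 1; ring
      _ = (‖z‖ ^ (2:ℝ)) ^ (((d:ℝ)-2)/2) := Real.rpow_mul (norm_nonneg z) _ _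
      _ = (‖z‖ ^ (2:ℕ)) ^ (((d:ℝ)-2)/2) := by
          rw [show (2:ℝ) = ((2:ℕ):ℝ) by norm_num, Real.rpow_natCast]
      _ = ((K.card:ℝ)*((n:ℝ)+1-K.card)/(n:ℝ)) ^ (((d:ℝ)-2)/2) := by rw [hzz]
      _ = ((K.card:ℝ)*((n:ℝ)+1-K.card)) ^ ((d:ℝ)/2-1) / (n:ℝ) ^ ((d:ℝ)/2-1) := by
          rw [Real.div_rpow (by positivity) hN.le,
            show ((d:ℝ)-2)/2 = (d:ℝ)/2 - 1 by ring]
  have hZ : (n:ℝ)^(d-1) = (n:ℝ)^((d:ℝ)/2) * (n:ℝ)^((d:ℝ)/2-1) := by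
    rw [← Real.rpow_add hN,
      show (d:ℝ)/2 + ((d:ℝ)/2 - 1) = ((d-1:ℕ):ℝ) by rw [hd1]; ring,
      Real.rpow_natCast]
  have hXne : (n:ℝ) ^ ((d:ℝ)/2) ≠ 0 := (Real.rpow_pos_of_pos hN _).ne'
  have hYne : ((K.card:ℝ)*((n:ℝ)+1-K.card)) ^ ((d:ℝ)/2-1) ≠ 0 :=
    (Real.rpow_pos_of_pos (by positivity) _).ne'
  have hWne : (n:ℝ) ^ ((d:ℝ)/2-1) ≠ 0 := (Real.rpow_pos_of_pos hN _).ne'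
  have hPne : ‖z‖ ≠ 0 := hP0.ne'
  have hPinv : (‖z‖⁻¹)^(d-1)
      = (((K.card:ℝ)*((n:ℝ)+1-K.card)) ^ ((d:ℝ)/2 - 1) / (n:ℝ) ^ ((d:ℝ)/2 - 1))⁻¹
        * ‖z‖⁻¹ := by
    rw [show d-1 = (d-2)+1 by omega, pow_succ, inv_pow, hPd2]
  have hscalar : (‖z‖⁻¹)^(d-1) * ((((n:ℝ)+1-K.card)/n) ^ (d-1) - ((K.card:ℝ)/n) ^ (d-1))
      = μ * ‖z‖⁻¹ := by
    rw [hμ, hPinv, div_pow, div_pow, hZ]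
    field_simp
  have hiff : μ = 0 ↔ 2 * K.card = n + 1 := by
    have hiff0 : μ = 0 ↔ ((n:ℝ)+1-K.card) ^ (d-1) = (K.card:ℝ) ^ (d-1) := by
      rw [hμ, div_eq_zero_iff, sub_eq_zero]
      constructor
      · rintro (h | h)
        · exact h
        · exact absurd h (by positivity)
      · exact fun h => Or.inl h
    rw [hiff0]
    constructor
    · intro h
      have heq : (n:ℝ)+1-K.card = K.card := by
        rcases lt_trichotomy ((n:ℝ)+1-K.card) (K.card:ℝ) with hlt | heq | hgt
        · have := pow_lt_pow_left₀ hlt hA.le (by omega : d - 1 ≠ 0)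
          linarith
        · exact heq
        · have := pow_lt_pow_left₀ hgt hM.le (by omega : d - 1 ≠ 0)
          linarith
      have hc : ((2*K.card : ℕ):ℝ) = ((n+1 : ℕ):ℝ) := by push_cast; linarith
      exact Nat.cast_injective hc
    · intro h
      have hc : ((2*K.card : ℕ):ℝ) = ((n+1 : ℕ):ℝ) := by rw [h]
      have heq : (n:ℝ)+1-K.card = K.card := by push_cast at hc; linarith
      rw [heq]
  refine ⟨hzz, ?_, hiff, ?_⟩
  · have hterm : ∀ j : Fin (n+1), ⟪‖z‖⁻¹ • z, simplexVec n j⟫ ^ (d - 1) • simplexVec n j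
        = (‖z‖⁻¹)^(d-1) • (⟪z, simplexVec n j⟫ ^ (d-1) • simplexVec n j) := by
      intro j
      rw [real_inner_smul_left, mul_pow, mul_smul]
    rw [Finset.sum_congr rfl (fun j _ => hterm j), ← Finset.smul_sum, hsum,
      smul_smul, smul_smul, hscalar]
  · intro hne h0
    obtain ⟨r, hr⟩ := hne
    have := hiff.mp h0
    omega
end

section
/- Let d ∈ {2,4}, n = 2, and T = Σ_{k=1}^3 v_k^{⊗d} with v_1, v_2, v_3 the simplex frame in ℝ² (unit vectors with pairwise inner products −1/2, summing to zero). Then every unit vector v ∈ ℝ² is an eigenvector of T, with eigenvalue μ = 3/2 if d = 2 and μ = 9/8 if d = 4. -/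
open scoped RealInnerProductSpace

theorem stmt_17 (d : ℕ) (hd : d = 2 ∨ d = 4)
    (v : Fin 3 → EuclideanSpace ℝ (Fin 2))
    (hnorm : ∀ k, ‖v k‖ = 1)
    (hinner : ∀ j k, j ≠ k → ⟪v j, v k⟫ = -(1 / 2))
    (hsum : ∑ k, v k = 0)
    (x : EuclideanSpace ℝ (Fin 2)) (hx : ‖x‖ = 1) :
    ∑ k, ⟪x, v k⟫ ^ (d - 1) • v k = (if d = 2 then (3 / 2 : ℝ) else 9 / 8) • x := by
  have g00 : ⟪v 0, v 0⟫ = 1 := by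
    rw [real_inner_self_eq_norm_sq, hnorm]; norm_num
  have g11 : ⟪v 1, v 1⟫ = 1 := by
    rw [real_inner_self_eq_norm_sq, hnorm]; norm_num
  have g01 : ⟪v 0, v 1⟫ = -(1/2) := hinner 0 1 (by decide)
  have g10 : ⟪v 1, v 0⟫ = -(1/2) := hinner 1 0 (by decide)
  have hv2 : v 2 = -(v 0 + v 1) := by
    have h3 := hsum
    rw [Fin.sum_univ_three] at h3
    rw [eq_neg_iff_add_eq_zero, ← h3]; abel
  -- linear independence of v 0, v 1
  have hli : LinearIndependent ℝ ![v 0, v 1] := by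
    rw [LinearIndependent.pair_iff]
    intro s t hst
    have h0 : ⟪s • v 0 + t • v 1, v 0⟫ = 0 := by rw [hst, inner_zero_left]
    have h1 : ⟪s • v 0 + t • v 1, v 1⟫ = 0 := by rw [hst, inner_zero_left]
    rw [inner_add_left, real_inner_smul_left, real_inner_smul_left, g00, g10] at h0
    rw [inner_add_left, real_inner_smul_left, real_inner_smul_left, g01, g11] at h1
    constructor <;> linarith
  have hr : Set.range ![v 0, v 1] = {v 0, v 1} := by
    simp only [Matrix.range_cons, Matrix.range_empty, Set.union_empty, Set.union_singleton]
    exact Set.pair_comm _ _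
  have hsp : Submodule.span ℝ (Set.range ![v 0, v 1]) = ⊤ := by
    apply Submodule.eq_top_of_finrank_eq
    rw [finrank_span_eq_card hli]
    simp
  obtain ⟨α, β, hx'⟩ : ∃ α β : ℝ, α • v 0 + β • v 1 = x := by
    rw [← Submodule.mem_span_pair, ← hr, hsp]
    trivial
  have ha : ⟪x, v 0⟫ = α - β/2 := by
    rw [← hx', inner_add_left, real_inner_smul_left, real_inner_smul_left, g00, g10]; ring
  have hb : ⟪x, v 1⟫ = β - α/2 := by
    rw [← hx', inner_add_left, real_inner_smul_left, real_inner_smul_left, g01, g11]; ring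
  have hc : ⟪x, v 2⟫ = -(α + β)/2 := by
    rw [hv2, inner_neg_right, inner_add_right, ha, hb]; ring
  have hxx : ⟪x, x⟫ = 1 := by
    rw [real_inner_self_eq_norm_sq, hx]; norm_num
  have hx1 : α^2 - α*β + β^2 = 1 := by
    have h : ⟪(α • v 0 + β • v 1 : EuclideanSpace ℝ (Fin 2)), x⟫ = 1 := by rw [hx']; exact hxx
    rw [inner_add_left, real_inner_smul_left, real_inner_smul_left,
      real_inner_comm x (v 0), real_inner_comm x (v 1), ha, hb] at h
    linear_combination h
  rcases hd with h | h <;> subst h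
  · rw [if_pos rfl, Fin.sum_univ_three]
    simp only [show (2:ℕ)-1 = 1 from rfl, pow_one]
    rw [ha, hb, hc, hv2, ← hx']
    match_scalars <;> ring
  · rw [if_neg (by norm_num), Fin.sum_univ_three]
    simp only [show (4:ℕ)-1 = 3 from rfl]
    rw [ha, hb, hc, hv2, ← hx']
    match_scalars
    · linear_combination (9/8*α) * hx1
    · linear_combination (9/8*β) * hx1
end

section
/- Let d ≥ 3 be odd, n = 2, and T = Σ_{k=1}^3 v_k^{⊗d} with v_1,v_2,v_3 the simplex frame in ℝ². Then the set of normalized eigenpairs of T is exactly {(±v_k, ±(1 − 2^{1−d})) : 1 ≤ k ≤ 3} (six eigenpairs in total). In particular, T has no orthogonal pair of eigenvectors, so T is not orthogonally decomposable. -/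
open scoped RealInnerProductSpace

private lemma slope_core18 {m : ℕ} (hme : Even m) (hm0 : m ≠ 0) {μ p q r : ℝ}
    (hpq : p < q) (hqr : q < r)
    (h1 : 3 * (q ^ m - p ^ m) = 2 * μ * (q - p))
    (h2 : 3 * (r ^ m - q ^ m) = 2 * μ * (r - q)) : False := by
  have sc := hme.strictConvexOn_pow hm0
  have hs := sc.slope_strict_mono_adjacent (Set.mem_univ p) (Set.mem_univ r) hpq hqr
  have e1 : (q ^ m - p ^ m) / (q - p) = 2 * μ / 3 := by
    rw [div_eq_div_iff (by linarith) (by norm_num)]; linarith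
  have e2 : (r ^ m - q ^ m) / (r - q) = 2 * μ / 3 := by
    rw [div_eq_div_iff (by linarith) (by norm_num)]; linarith
  rw [e1, e2] at hs
  exact lt_irrefl _ hs

private lemma two_of_three18 {m : ℕ} (hme : Even m) (hm0 : m ≠ 0) {μ a b c : ℝ}
    (hab : 3 * (a ^ m - b ^ m) = 2 * μ * (a - b))
    (hbc : 3 * (b ^ m - c ^ m) = 2 * μ * (b - c))
    (hac : 3 * (a ^ m - c ^ m) = 2 * μ * (a - c)) :
    a = b ∨ b = c ∨ a = c := by
  by_contra h
  push_neg at h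
  obtain ⟨h1, h2, h3⟩ := h
  rcases lt_trichotomy a b with hab' | hab' | hab'
  · rcases lt_trichotomy b c with hbc' | e | hbc'
    · exact slope_core18 (μ := μ) hme hm0 hab' hbc'
        (by linear_combination -hab) (by linear_combination -hbc)
    · exact h2 e
    · rcases lt_trichotomy a c with hac' | e | hac'
      · exact slope_core18 (μ := μ) hme hm0 hac' hbc'
          (by linear_combination -hac) (by linear_combination hbc)
      · exact h3 e
      · exact slope_core18 (μ := μ) hme hm0 hac' hab'
          (by linear_combination hac) (by linear_combination -hab)
  · exact h1 hab'
  · rcases lt_trichotomy a c with hac' | e | hac'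
    · exact slope_core18 (μ := μ) hme hm0 hab' hac'
        (by linear_combination hab) (by linear_combination -hac)
    · exact h3 e
    · rcases lt_trichotomy b c with hbc' | e | hbc'
      · exact slope_core18 (μ := μ) hme hm0 hbc' hac'
          (by linear_combination -hbc) (by linear_combination hac)
      · exact h2 e
      · exact slope_core18 (μ := μ) hme hm0 hbc' hab'
          (by linear_combination hbc) (by linear_combination hab)

private lemma branch_val18 {d : ℕ} (hd : 3 ≤ d) (hdodd : Odd d) {μ s t : ℝ}
    (hs : 2 * s + t = 0) (hq : 2 * s ^ 2 + t ^ 2 = 3 / 2)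
    (het : 2 * (s ^ (d - 1) * (-(1 / 2))) + t ^ (d - 1) = μ * t) :
    (s = -(1 / 2) ∧ t = 1 ∧ μ = 1 - (2 : ℝ) ^ (1 - (d : ℤ))) ∨
      (s = 1 / 2 ∧ t = -1 ∧ μ = -(1 - (2 : ℝ) ^ (1 - (d : ℤ)))) := by
  have hme : Even (d - 1) := Nat.Odd.sub_odd hdodd odd_one
  have hhalf : ((1 / 2 : ℝ)) ^ (d - 1) = (2 : ℝ) ^ (1 - (d : ℤ)) := by
    have h1 : (1 : ℤ) - (d : ℤ) = -(((d - 1 : ℕ)) : ℤ) := by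
      rw [Nat.cast_sub (by omega : 1 ≤ d)]; push_cast; ring
    rw [h1, zpow_neg, zpow_natCast, ← inv_pow]
    norm_num
  have hneg : ((-(1 / 2) : ℝ)) ^ (d - 1) = (2 : ℝ) ^ (1 - (d : ℤ)) := by
    rw [hme.neg_pow, hhalf]
  have ht : t = -(2 * s) := by linarith
  have hs2 : s ^ 2 = 1 / 4 := by
    rw [ht] at hq; linear_combination hq / 6
  have hcase : s = -(1 / 2) ∨ s = 1 / 2 := by
    have hfac : (s + 1 / 2) * (s - 1 / 2) = 0 := by linear_combination hs2
    rcases mul_eq_zero.mp hfac with h | h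
    · left; linarith
    · right; linarith
  rcases hcase with h | h
  · left
    have ht1 : t = 1 := by rw [ht, h]; norm_num
    refine ⟨h, ht1, ?_⟩
    rw [h, ht1, hneg, one_pow] at het
    linarith
  · right
    have ht1 : t = -1 := by rw [ht, h]; norm_num
    refine ⟨h, ht1, ?_⟩
    rw [h, ht1, hhalf, hme.neg_pow, one_pow] at het
    linarith

theorem stmt_18 (d : ℕ) (hd : 3 ≤ d) (hdodd : Odd d)
    (v : Fin 3 → EuclideanSpace ℝ (Fin 2))
    (hnorm : ∀ k, ‖v k‖ = 1)
    (hinner : ∀ j k, j ≠ k → ⟪v j, v k⟫ = -(1 / 2))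
    (hsum : ∑ k, v k = 0) :
    (∀ (x : EuclideanSpace ℝ (Fin 2)) (μ : ℝ),
      (‖x‖ = 1 ∧ ∑ k, ⟪x, v k⟫ ^ (d - 1) • v k = μ • x) ↔
        ∃ k, (x = v k ∧ μ = 1 - (2 : ℝ) ^ (1 - (d : ℤ))) ∨
          (x = -v k ∧ μ = -(1 - (2 : ℝ) ^ (1 - (d : ℤ))))) ∧
    ¬ ∃ (x y : EuclideanSpace ℝ (Fin 2)) (μ ν : ℝ),
        ‖x‖ = 1 ∧ ‖y‖ = 1 ∧ ⟪x, y⟫ = 0 ∧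
        (∑ k, ⟪x, v k⟫ ^ (d - 1) • v k = μ • x) ∧
        (∑ k, ⟪y, v k⟫ ^ (d - 1) • v k = ν • y) := by
  have hme : Even (d - 1) := Nat.Odd.sub_odd hdodd odd_one
  have hm0 : d - 1 ≠ 0 := by omega
  have hvv : ∀ k, ⟪v k, v k⟫ = 1 := fun k => by
    rw [real_inner_self_eq_norm_sq, hnorm, one_pow]
  have h012 : v 0 + v 1 + v 2 = 0 := by rw [← Fin.sum_univ_three v]; exact hsum
  have hv2 : v 2 = -(v 0 + v 1) := eq_neg_of_add_eq_zero_right h012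
  have hhalf : ((1 / 2 : ℝ)) ^ (d - 1) = (2 : ℝ) ^ (1 - (d : ℤ)) := by
    have h1 : (1 : ℤ) - (d : ℤ) = -(((d - 1 : ℕ)) : ℤ) := by
      rw [Nat.cast_sub (by omega : 1 ≤ d)]; push_cast; ring
    rw [h1, zpow_neg, zpow_natCast, ← inv_pow]
    norm_num
  have hneg : ((-(1 / 2) : ℝ)) ^ (d - 1) = (2 : ℝ) ^ (1 - (d : ℤ)) := by
    rw [hme.neg_pow, hhalf]
  -- span lemma
  have hindep : LinearIndependent ℝ ![v 0, v 1] := by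
    rw [LinearIndependent.pair_iff]
    intro s t hst
    have h0 : ⟪s • v 0 + t • v 1, v 0⟫ = 0 := by rw [hst, inner_zero_left]
    have h1 : ⟪s • v 0 + t • v 1, v 1⟫ = 0 := by rw [hst, inner_zero_left]
    simp only [inner_add_left, real_inner_smul_left] at h0 h1
    rw [hvv 0, hinner 1 0 (by decide)] at h0
    rw [hvv 1, hinner 0 1 (by decide)] at h1
    constructor <;> linarith
  have htop : Submodule.span ℝ (Set.range ![v 0, v 1]) = ⊤ :=
    hindep.span_eq_top_of_card_eq_finrank (by simp)
  have hspan : ∀ w : EuclideanSpace ℝ (Fin 2), ⟪w, v 0⟫ = 0 → ⟪w, v 1⟫ = 0 → w = 0 := by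
    intro w h0 h1
    have key : ⟪w, w⟫ = 0 := by
      have hu : w ∈ Submodule.span ℝ (Set.range ![v 0, v 1]) := htop ▸ Submodule.mem_top
      have hrange : Set.range ![v 0, v 1] = {v 0, v 1} := by
        simp [Matrix.range_cons, Matrix.range_empty, Set.pair_comm]
      rw [hrange] at hu
      obtain ⟨s, t, hst⟩ := Submodule.mem_span_pair.mp hu
      have h2 : ⟪w, s • v 0 + t • v 1⟫ = 0 := by
        rw [inner_add_right, real_inner_smul_right, real_inner_smul_right, h0, h1]
        ring
      rw [hst] at h2
      exact h2
    exact inner_self_eq_zero.mp key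
  -- frame identity
  have hframe : ∀ x : EuclideanSpace ℝ (Fin 2),
      ∑ k, ⟪x, v k⟫ • v k = (3 / 2 : ℝ) • x := by
    intro x
    have hsx : ⟪x, v 0⟫ + ⟪x, v 1⟫ + ⟪x, v 2⟫ = 0 := by
      have h : ⟪x, ∑ k, v k⟫ = 0 := by rw [hsum, inner_zero_right]
      rwa [inner_sum, Fin.sum_univ_three] at h
    have h := hspan (∑ k, ⟪x, v k⟫ • v k - (3 / 2 : ℝ) • x) ?_ ?_
    · exact sub_eq_zero.mp h
    · simp only [inner_sub_left, sum_inner, Fin.sum_univ_three, inner_add_left, real_inner_smul_left]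
      rw [hvv 0, hinner 1 0 (by decide), hinner 2 0 (by decide)]
      linarith
    · simp only [inner_sub_left, sum_inner, Fin.sum_univ_three, inner_add_left, real_inner_smul_left]
      rw [hvv 1, hinner 0 1 (by decide), hinner 2 1 (by decide)]
      linarith
  have part1 : ∀ (x : EuclideanSpace ℝ (Fin 2)) (μ : ℝ),
      (‖x‖ = 1 ∧ ∑ k, ⟪x, v k⟫ ^ (d - 1) • v k = μ • x) ↔
        ∃ k, (x = v k ∧ μ = 1 - (2 : ℝ) ^ (1 - (d : ℤ))) ∨
          (x = -v k ∧ μ = -(1 - (2 : ℝ) ^ (1 - (d : ℤ)))) := by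
    intro x μ
    constructor
    · rintro ⟨hx, heq⟩
      have hsx : ⟪x, v 0⟫ + ⟪x, v 1⟫ + ⟪x, v 2⟫ = 0 := by
        have h : ⟪x, ∑ k, v k⟫ = 0 := by rw [hsum, inner_zero_right]
        rwa [inner_sum, Fin.sum_univ_three] at h
      have hsq : ⟪x, v 0⟫ ^ 2 + ⟪x, v 1⟫ ^ 2 + ⟪x, v 2⟫ ^ 2 = 3 / 2 := by
        have h := congrArg (fun u => ⟪x, u⟫) (hframe x)
        simp only [inner_sum, Fin.sum_univ_three, inner_add_right, real_inner_smul_right] at h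
        rw [real_inner_self_eq_norm_sq, hx] at h
        linear_combination h
      have e0 : ⟪x, v 0⟫ ^ (d - 1) * 1 + ⟪x, v 1⟫ ^ (d - 1) * (-(1 / 2)) +
          ⟪x, v 2⟫ ^ (d - 1) * (-(1 / 2)) = μ * ⟪x, v 0⟫ := by
        have h := congrArg (fun u => ⟪u, v 0⟫) heq
        simp only [sum_inner, Fin.sum_univ_three, inner_add_left, real_inner_smul_left] at h
        rw [hvv 0, hinner 1 0 (by decide), hinner 2 0 (by decide)] at h
        exact h
      have e1 : ⟪x, v 0⟫ ^ (d - 1) * (-(1 / 2)) + ⟪x, v 1⟫ ^ (d - 1) * 1 +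
          ⟪x, v 2⟫ ^ (d - 1) * (-(1 / 2)) = μ * ⟪x, v 1⟫ := by
        have h := congrArg (fun u => ⟪u, v 1⟫) heq
        simp only [sum_inner, Fin.sum_univ_three, inner_add_left, real_inner_smul_left] at h
        rw [hvv 1, hinner 0 1 (by decide), hinner 2 1 (by decide)] at h
        exact h
      have e2 : ⟪x, v 0⟫ ^ (d - 1) * (-(1 / 2)) + ⟪x, v 1⟫ ^ (d - 1) * (-(1 / 2)) +
          ⟪x, v 2⟫ ^ (d - 1) * 1 = μ * ⟪x, v 2⟫ := by
        have h := congrArg (fun u => ⟪u, v 2⟫) heq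
        simp only [sum_inner, Fin.sum_univ_three, inner_add_left, real_inner_smul_left] at h
        rw [hvv 2, hinner 0 2 (by decide), hinner 1 2 (by decide)] at h
        exact h
      have h01 : 3 * (⟪x, v 0⟫ ^ (d - 1) - ⟪x, v 1⟫ ^ (d - 1)) = 2 * μ * (⟪x, v 0⟫ - ⟪x, v 1⟫) := by
        linear_combination 2 * e0 - 2 * e1
      have h12 : 3 * (⟪x, v 1⟫ ^ (d - 1) - ⟪x, v 2⟫ ^ (d - 1)) = 2 * μ * (⟪x, v 1⟫ - ⟪x, v 2⟫) := by
        linear_combination 2 * e1 - 2 * e2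
      have h02 : 3 * (⟪x, v 0⟫ ^ (d - 1) - ⟪x, v 2⟫ ^ (d - 1)) = 2 * μ * (⟪x, v 0⟫ - ⟪x, v 2⟫) := by
        linear_combination 2 * e0 - 2 * e2
      rcases two_of_three18 hme hm0 h01 h12 h02 with hab | hab | hab
      · -- ⟪x,v0⟫ = ⟪x,v1⟫, distinguished index 2
        have hbv := branch_val18 hd hdodd (μ := μ) (s := ⟪x, v 0⟫) (t := ⟪x, v 2⟫)
          (by linarith) (by linear_combination hsq + (⟪x, v 0⟫ + ⟪x, v 1⟫) * hab)
          (by rw [← hab] at e2; linarith)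
        refine ⟨2, ?_⟩
        rcases hbv with ⟨_, ht1, hmu⟩ | ⟨_, ht1, hmu⟩
        · exact Or.inl ⟨(inner_eq_one_iff_of_norm_eq_one (𝕜 := ℝ) hx (hnorm 2)).mp ht1, hmu⟩
        · refine Or.inr ⟨?_, hmu⟩
          have hnx : ‖-x‖ = 1 := by rw [norm_neg]; exact hx
          have h := (inner_eq_one_iff_of_norm_eq_one (𝕜 := ℝ) hnx (hnorm 2)).mp
            (by rw [inner_neg_left, ht1]; norm_num)
          exact neg_eq_iff_eq_neg.mp h
      · -- ⟪x,v1⟫ = ⟪x,v2⟫, distinguished index 0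
        have hbv := branch_val18 hd hdodd (μ := μ) (s := ⟪x, v 1⟫) (t := ⟪x, v 0⟫)
          (by linarith) (by linear_combination hsq + (⟪x, v 1⟫ + ⟪x, v 2⟫) * hab)
          (by rw [← hab] at e0; linarith)
        refine ⟨0, ?_⟩
        rcases hbv with ⟨_, ht1, hmu⟩ | ⟨_, ht1, hmu⟩
        · exact Or.inl ⟨(inner_eq_one_iff_of_norm_eq_one (𝕜 := ℝ) hx (hnorm 0)).mp ht1, hmu⟩
        · refine Or.inr ⟨?_, hmu⟩
          have hnx : ‖-x‖ = 1 := by rw [norm_neg]; exact hx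
          have h := (inner_eq_one_iff_of_norm_eq_one (𝕜 := ℝ) hnx (hnorm 0)).mp
            (by rw [inner_neg_left, ht1]; norm_num)
          exact neg_eq_iff_eq_neg.mp h
      · -- ⟪x,v0⟫ = ⟪x,v2⟫, distinguished index 1
        have hbv := branch_val18 hd hdodd (μ := μ) (s := ⟪x, v 0⟫) (t := ⟪x, v 1⟫)
          (by linarith) (by linear_combination hsq + (⟪x, v 0⟫ + ⟪x, v 2⟫) * hab)
          (by rw [← hab] at e1; linarith)
        refine ⟨1, ?_⟩
        rcases hbv with ⟨_, ht1, hmu⟩ | ⟨_, ht1, hmu⟩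
        · exact Or.inl ⟨(inner_eq_one_iff_of_norm_eq_one (𝕜 := ℝ) hx (hnorm 1)).mp ht1, hmu⟩
        · refine Or.inr ⟨?_, hmu⟩
          have hnx : ‖-x‖ = 1 := by rw [norm_neg]; exact hx
          have h := (inner_eq_one_iff_of_norm_eq_one (𝕜 := ℝ) hnx (hnorm 1)).mp
            (by rw [inner_neg_left, ht1]; norm_num)
          exact neg_eq_iff_eq_neg.mp h
    · rintro ⟨k, ⟨rfl, rfl⟩ | ⟨rfl, rfl⟩⟩
      · refine ⟨hnorm k, ?_⟩
        rw [Fin.sum_univ_three]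
        fin_cases k <;>
          simp only [Fin.isValue, Fin.mk_zero, Fin.mk_one,
            show (⟨2, by omega⟩ : Fin 3) = 2 from rfl]
        · rw [hvv 0, hinner 0 1 (by decide), hinner 0 2 (by decide), one_pow, hneg, hv2]
          module
        · rw [hvv 1, hinner 1 0 (by decide), hinner 1 2 (by decide), one_pow, hneg, hv2]
          module
        · rw [hvv 2, hinner 2 0 (by decide), hinner 2 1 (by decide), one_pow, hneg, hv2]
          module
      · refine ⟨by rw [norm_neg]; exact hnorm k, ?_⟩
        rw [Fin.sum_univ_three]
        simp only [inner_neg_left]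
        have hp1 : (-(1 : ℝ)) ^ (d - 1) = 1 := by rw [hme.neg_pow, one_pow]
        have hp2 : (-(-(1 / 2) : ℝ)) ^ (d - 1) = (2 : ℝ) ^ (1 - (d : ℤ)) := by
          rw [neg_neg, hhalf]
        fin_cases k <;>
          simp only [Fin.isValue, Fin.mk_zero, Fin.mk_one,
            show (⟨2, by omega⟩ : Fin 3) = 2 from rfl]
        · rw [hvv 0, hinner 0 1 (by decide), hinner 0 2 (by decide), hp1, hp2, hv2]
          module
        · rw [hvv 1, hinner 1 0 (by decide), hinner 1 2 (by decide), hp1, hp2, hv2]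
          module
        · rw [hvv 2, hinner 2 0 (by decide), hinner 2 1 (by decide), hp1, hp2, hv2]
          module
  refine ⟨part1, ?_⟩
  rintro ⟨x, y, μ, ν, hx1, hy1, hxy, hex, hey⟩
  obtain ⟨j, hj⟩ := (part1 x μ).mp ⟨hx1, hex⟩
  obtain ⟨k, hk⟩ := (part1 y ν).mp ⟨hy1, hey⟩
  have hz : ⟪v j, v k⟫ = 0 := by
    rcases hj with ⟨rfl, -⟩ | ⟨rfl, -⟩ <;> rcases hk with ⟨rfl, -⟩ | ⟨rfl, -⟩
    · exact hxy
    · rw [inner_neg_right, neg_eq_zero] at hxy; exact hxy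
    · rw [inner_neg_left, neg_eq_zero] at hxy; exact hxy
    · rw [inner_neg_left, inner_neg_right, neg_neg] at hxy; exact hxy
  rcases eq_or_ne j k with rfl | hjk
  · rw [hvv j] at hz; norm_num at hz
  · rw [hinner j k hjk] at hz; norm_num at hz
end

section
/- Let d ≥ 3 be odd, n = 2, T = Σ_{k=1}^3 v_k^{⊗d} the regular simplex tensor in ℝ², and let x = ±v_k be a normalized eigenvector with eigenvalue μ = ±(1 − 2^{1−d}). Then the Jacobian of the tensor power map φ(x) = T·x^{d−1}/‖T·x^{d−1}‖ at x, given by φ'(x) = ((d−1)/|μ|)(I − xxᵀ)(T·x^{d−2}), has spectral radius 3(d−1)/(2^{d−1} − 1). In particular x is a repelling fixed point for d = 3 (spectral radius > 1) and attractive for odd d ≥ 5 (spectral radius < 1). -/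
open Matrix

private lemma frame (p q r s t u : ℝ)
    (h1 : p * p + q * q = 1) (h2 : r * r + s * s = 1) (h3 : t * t + u * u = 1)
    (h12 : p * r + q * s = -(1/2)) (h13 : p * t + q * u = -(1/2))
    (h23 : r * t + s * u = -(1/2)) :
    r^2 + t^2 = 3/2 - p^2 ∧ r*s + t*u = -(p*q) ∧ s^2 + u^2 = 3/2 - q^2 := by
  have key : (p+r+t)^2 + (q+s+u)^2 = 0 := by
    linear_combination h1 + h2 + h3 + 2*h12 + 2*h13 + 2*h23
  have ht : t = -p - r := by nlinarith [sq_nonneg (p+r+t), sq_nonneg (q+s+u)]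
  have hu : u = -q - s := by nlinarith [sq_nonneg (p+r+t), sq_nonneg (q+s+u)]
  subst ht hu
  have hG1 : 2*p^2+2*r^2+2*p*r - 3/2 = 0 := by
    linear_combination (2-2*r^2)*h1 + 2*q^2*h2 + (1+2*p*r-2*q*s)*h12
  have hG3 : 2*q^2+2*s^2+2*q*s - 3/2 = 0 := by
    linear_combination (2-2*s^2)*h1 + 2*p^2*h2 + (1+2*q*s-2*p*r)*h12
  have hrow0 : (p^2+r^2+(p+r)^2 - 3/2)*p + (2*p*q+2*r*s+p*s+q*r)*q = 0 := by
    linear_combination p*h1 + r*h12 + (-p-r)*h13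
  have hrow1 : (2*p*q+2*r*s+p*s+q*r)*p + (q^2+s^2+(q+s)^2 - 3/2)*q = 0 := by
    linear_combination q*h1 + s*h12 + (-q-s)*h13
  have hAq : (2*p*q+2*r*s+p*s+q*r)*q = 0 := by linear_combination hrow0 - p*hG1
  have hAp : (2*p*q+2*r*s+p*s+q*r)*p = 0 := by linear_combination hrow1 - q*hG3
  refine ⟨by linear_combination hG1, ?_, by linear_combination hG3⟩
  linear_combination p*hAp + q*hAq - (2*p*q+2*r*s+p*s+q*r)*h1

private lemma core (d : ℕ) (hd : 3 ≤ d) (hdodd : Odd d)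
    (w1 w2 w3 x : Fin 2 → ℝ) (μ ε : ℝ)
    (h1 : w1 ⬝ᵥ w1 = 1) (h2 : w2 ⬝ᵥ w2 = 1) (h3 : w3 ⬝ᵥ w3 = 1)
    (h12 : w1 ⬝ᵥ w2 = -(1/2)) (h13 : w1 ⬝ᵥ w3 = -(1/2)) (h23 : w2 ⬝ᵥ w3 = -(1/2))
    (hε : ε = 1 ∨ ε = -1)
    (hxv : x = ε • w1) (hμ : μ = ε * (1 - (2:ℝ)^(1-(d:ℤ))))
    (M J : Matrix (Fin 2) (Fin 2) ℝ)
    (hM : M = (x ⬝ᵥ w1) ^ (d-2) • vecMulVec w1 w1 + (x ⬝ᵥ w2) ^ (d-2) • vecMulVec w2 w2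
        + (x ⬝ᵥ w3) ^ (d-2) • vecMulVec w3 w3)
    (hJ : J = (((d:ℝ)-1)/|μ|) • ((1 - vecMulVec x x) * M)) :
    IsGreatest {r : ℝ | ∃ c ∈ spectrum ℝ J, |c| = r}
      (3 * ((d : ℝ) - 1) / (2 ^ (d - 1) - 1)) := by
  simp only [dotProduct, Fin.sum_univ_two] at h1 h2 h3 h12 h13 h23
  obtain ⟨F1, F2, F3⟩ := frame (w1 0) (w1 1) (w2 0) (w2 1) (w3 0) (w3 1) h1 h2 h3 h12 h13 h23
  set S : ℝ := (2:ℝ)^(d-1) with hSdef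
  have hS4 : (4:ℝ) ≤ S := by
    calc (4:ℝ) = 2^2 := by norm_num
    _ ≤ 2^(d-1) := by apply pow_le_pow_right₀ (by norm_num) (by omega)
  have hS0 : S ≠ 0 := by intro h; rw [h] at hS4; norm_num at hS4
  have hS1 : S - 1 ≠ 0 := sub_ne_zero.mpr (by linarith)
  clear_value S
  have hodd2 : Odd (d-2) := by obtain ⟨m, hm⟩ := hdodd; exact ⟨m - 1, by omega⟩
  have hε2 : ε^2 = 1 := by rcases hε with h|h <;> rw [h] <;> norm_num
  have hεpow : ε^(d-2) = ε := by
    rcases hε with h|h <;> rw [h]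
    · exact one_pow _
    · exact hodd2.neg_one_pow
  have hzpow : (2:ℝ)^(1-(d:ℤ)) = 1/S := by
    have h1d : (1 - (d:ℤ)) = -((d-1 : ℕ) : ℤ) := by omega
    rw [h1d, _root_.zpow_neg, zpow_natCast, hSdef, one_div]
  have hpos : (0:ℝ) < 1 - 1/S := by
    have : (1:ℝ)/S ≤ 1/4 := by
      apply one_div_le_one_div_of_le <;> linarith
    linarith
  have habs : |μ| = 1 - 1/S := by
    rw [hμ, hzpow]; rcases hε with h|h <;> rw [h]
    · rw [one_mul, abs_of_pos hpos]
    · rw [neg_one_mul, abs_neg, abs_of_pos hpos]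
  have hd1 : x ⬝ᵥ w1 = ε := by
    subst hxv
    simp only [dotProduct, Fin.sum_univ_two, Pi.smul_apply, smul_eq_mul]
    linear_combination ε*h1
  have hd2 : x ⬝ᵥ w2 = -(ε/2) := by
    subst hxv
    simp only [dotProduct, Fin.sum_univ_two, Pi.smul_apply, smul_eq_mul]
    linear_combination ε*h12
  have hd3 : x ⬝ᵥ w3 = -(ε/2) := by
    subst hxv
    simp only [dotProduct, Fin.sum_univ_two, Pi.smul_apply, smul_eq_mul]
    linear_combination ε*h13
  have hhalf : ((1:ℝ)/2)^(d-2) = 2/S := by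
    have hps : (2:ℝ)^(d-2) * 2 = S := by rw [hSdef, ← pow_succ]; congr 1; omega
    rw [div_pow, one_pow, div_eq_div_iff (by positivity) (by linarith)]
    linarith
  have hpow1 : (x ⬝ᵥ w1)^(d-2) = ε := by rw [hd1]; exact hεpow
  have hpow2 : (x ⬝ᵥ w2)^(d-2) = -(ε * (2/S)) := by
    rw [hd2, show (-(ε/2):ℝ) = (-1) * (ε * (1/2)) by ring, mul_pow, mul_pow,
      hodd2.neg_one_pow, hεpow, hhalf]; ring
  have hpow3 : (x ⬝ᵥ w3)^(d-2) = -(ε * (2/S)) := by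
    rw [hd3, show (-(ε/2):ℝ) = (-1) * (ε * (1/2)) by ring, mul_pow, mul_pow,
      hodd2.neg_one_pow, hεpow, hhalf]; ring
  have hM' : M = ε • ((1 + 2/S) • vecMulVec w1 w1 - (3/S) • (1 : Matrix (Fin 2) (Fin 2) ℝ)) := by
    rw [hM, hpow1, hpow2, hpow3]
    ext i j
    fin_cases i <;> fin_cases j
    · norm_num [Matrix.add_apply, Matrix.sub_apply, Matrix.smul_apply, vecMulVec_apply,
        Matrix.one_apply]
      linear_combination (-(2*ε/S))*F1
    · norm_num [Matrix.add_apply, Matrix.sub_apply, Matrix.smul_apply, vecMulVec_apply,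
        Matrix.one_apply]
      linear_combination (-(2*ε/S))*F2
    · norm_num [Matrix.add_apply, Matrix.sub_apply, Matrix.smul_apply, vecMulVec_apply,
        Matrix.one_apply]
      linear_combination (-(2*ε/S))*F2
    · norm_num [Matrix.add_apply, Matrix.sub_apply, Matrix.smul_apply, vecMulVec_apply,
        Matrix.one_apply]
      linear_combination (-(2*ε/S))*F3
  have hPw : (1 - vecMulVec x x) * vecMulVec w1 w1 = 0 := by
    subst hxv
    ext i j
    fin_cases i <;> fin_cases j <;>
      simp only [Matrix.mul_apply, Fin.sum_univ_two, Matrix.sub_apply, Matrix.one_apply,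
        vecMulVec_apply, Pi.smul_apply, smul_eq_mul, Matrix.zero_apply, Fin.isValue] <;>
      norm_num
    · linear_combination (-(ε^2*(w1 0*w1 0)))*h1 - (w1 0*w1 0)*hε2
    · linear_combination (-(ε^2*(w1 0*w1 1)))*h1 - (w1 0*w1 1)*hε2
    · linear_combination (-(ε^2*(w1 1*w1 0)))*h1 - (w1 1*w1 0)*hε2
    · linear_combination (-(ε^2*(w1 1*w1 1)))*h1 - (w1 1*w1 1)*hε2
  set c0 : ℝ := -(ε * (3*((d:ℝ)-1)/(S-1))) with hc0
  have hJP : J = c0 • (1 - vecMulVec x x) := by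
    rw [hJ, hM', habs, Matrix.mul_smul, Matrix.mul_sub, Matrix.mul_smul, Matrix.mul_smul,
      hPw, Matrix.mul_one]
    simp only [smul_zero, zero_sub, smul_neg, smul_smul]
    rw [← neg_smul, hc0]
    congr 1
    field_simp
  have hxx : x 0 * x 0 + x 1 * x 1 = 1 := by
    subst hxv
    simp only [Pi.smul_apply, smul_eq_mul]
    linear_combination ε^2*h1 + hε2
  have hdet : ∀ c : ℝ, (algebraMap ℝ (Matrix (Fin 2) (Fin 2) ℝ) c - J).det = c * (c - c0) := by
    intro c
    rw [hJP, Matrix.det_fin_two]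
    simp only [Matrix.sub_apply, Matrix.smul_apply, Matrix.algebraMap_matrix_apply,
      Matrix.one_apply, vecMulVec_apply, smul_eq_mul, Fin.isValue]
    norm_num
    linear_combination (c0*c - c0^2) * hxx
  have hspec : ∀ c : ℝ, c ∈ spectrum ℝ J ↔ c = 0 ∨ c = c0 := by
    intro c
    rw [spectrum.mem_iff, Matrix.isUnit_iff_isUnit_det, isUnit_iff_ne_zero, not_not,
      hdet c, mul_eq_zero, sub_eq_zero]
  have hτpos : 0 < 3 * ((d:ℝ) - 1) / (S - 1) := by
    have h3d : (3:ℝ) ≤ (d:ℝ) := by exact_mod_cast hd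
    apply div_pos <;> linarith
  have hεabs : |ε| = 1 := by rcases hε with h|h <;> rw [h] <;> norm_num
  have habs0 : |c0| = 3 * ((d:ℝ) - 1) / (S - 1) := by
    rw [hc0, abs_neg, abs_mul, hεabs, one_mul, abs_of_pos hτpos]
  constructor
  · exact ⟨c0, (hspec c0).mpr (Or.inr rfl), habs0⟩
  · rintro r ⟨c, hc, rfl⟩
    rcases (hspec c).mp hc with rfl | rfl
    · simpa using hτpos.le
    · rw [habs0]

private lemma natbound (d : ℕ) (h5 : 5 ≤ d) : 3 * d ≤ 2 ^ (d - 1) := by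
  induction d, h5 using Nat.le_induction with
  | base => norm_num
  | succ n hn ih =>
    have h1 : n - 1 + 1 = n := by omega
    have h2 : 2 ^ n = 2 ^ (n - 1) * 2 := by rw [← pow_succ, h1]
    have h3 : 15 ≤ 3 * n := by omega
    simp only [Nat.add_sub_cancel]
    omega

theorem stmt_19 (d : ℕ) (hd : 3 ≤ d) (hdodd : Odd d)
    (v : Fin 3 → Fin 2 → ℝ)
    (hnorm : ∀ k, v k ⬝ᵥ v k = 1)
    (hinner : ∀ j k, j ≠ k → v j ⬝ᵥ v k = -(1 / 2))
    (x : Fin 2 → ℝ) (μ : ℝ)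
    (hx : ∃ k, (x = v k ∧ μ = 1 - (2 : ℝ) ^ (1 - (d : ℤ))) ∨
        (x = -v k ∧ μ = -(1 - (2 : ℝ) ^ (1 - (d : ℤ)))))
    (M J : Matrix (Fin 2) (Fin 2) ℝ)
    (hM : M = ∑ k, (x ⬝ᵥ v k) ^ (d - 2) • vecMulVec (v k) (v k))
    (hJ : J = (((d : ℝ) - 1) / |μ|) • ((1 - vecMulVec x x) * M)) :
    IsGreatest {r : ℝ | ∃ c ∈ spectrum ℝ J, |c| = r}
      (3 * ((d : ℝ) - 1) / (2 ^ (d - 1) - 1)) ∧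
    (d = 3 → 1 < 3 * ((d : ℝ) - 1) / ((2 : ℝ) ^ (d - 1) - 1)) ∧
    (5 ≤ d → 3 * ((d : ℝ) - 1) / ((2 : ℝ) ^ (d - 1) - 1) < 1) := by
  have hS4 : (4:ℝ) ≤ 2 ^ (d-1) := by
    calc (4:ℝ) = 2^2 := by norm_num
    _ ≤ 2^(d-1) := by apply pow_le_pow_right₀ (by norm_num) (by omega)
  refine ⟨?_, ?_, ?_⟩
  · rw [Fin.sum_univ_three] at hM
    obtain ⟨k, hk⟩ := hx
    fin_cases k
    · rcases hk with ⟨hxe, hμe⟩ | ⟨hxe, hμe⟩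
      · exact core d hd hdodd (v 0) (v 1) (v 2) x μ 1 (hnorm 0) (hnorm 1) (hnorm 2)
          (hinner 0 1 (by decide)) (hinner 0 2 (by decide)) (hinner 1 2 (by decide))
          (Or.inl rfl) (by rw [hxe, one_smul]; rfl) (by rw [hμe, one_mul]) M J hM hJ
      · exact core d hd hdodd (v 0) (v 1) (v 2) x μ (-1) (hnorm 0) (hnorm 1) (hnorm 2)
          (hinner 0 1 (by decide)) (hinner 0 2 (by decide)) (hinner 1 2 (by decide))
          (Or.inr rfl) (by rw [hxe, neg_one_smul]; rfl) (by rw [hμe, neg_one_mul]) M J hM hJ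
    · rcases hk with ⟨hxe, hμe⟩ | ⟨hxe, hμe⟩
      · exact core d hd hdodd (v 1) (v 0) (v 2) x μ 1 (hnorm 1) (hnorm 0) (hnorm 2)
          (hinner 1 0 (by decide)) (hinner 1 2 (by decide)) (hinner 0 2 (by decide))
          (Or.inl rfl) (by rw [hxe, one_smul]; rfl) (by rw [hμe, one_mul]) M J (by rw [hM]; abel) hJ
      · exact core d hd hdodd (v 1) (v 0) (v 2) x μ (-1) (hnorm 1) (hnorm 0) (hnorm 2)
          (hinner 1 0 (by decide)) (hinner 1 2 (by decide)) (hinner 0 2 (by decide))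
          (Or.inr rfl) (by rw [hxe, neg_one_smul]; rfl) (by rw [hμe, neg_one_mul]) M J (by rw [hM]; abel) hJ
    · rcases hk with ⟨hxe, hμe⟩ | ⟨hxe, hμe⟩
      · exact core d hd hdodd (v 2) (v 0) (v 1) x μ 1 (hnorm 2) (hnorm 0) (hnorm 1)
          (hinner 2 0 (by decide)) (hinner 2 1 (by decide)) (hinner 0 1 (by decide))
          (Or.inl rfl) (by rw [hxe, one_smul]; rfl) (by rw [hμe, one_mul]) M J (by rw [hM]; abel) hJ
      · exact core d hd hdodd (v 2) (v 0) (v 1) x μ (-1) (hnorm 2) (hnorm 0) (hnorm 1)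
          (hinner 2 0 (by decide)) (hinner 2 1 (by decide)) (hinner 0 1 (by decide))
          (Or.inr rfl) (by rw [hxe, neg_one_smul]; rfl) (by rw [hμe, neg_one_mul]) M J (by rw [hM]; abel) hJ
  · intro h3; subst h3; norm_num
  · intro h5
    have hnat := natbound d h5
    have hcast : (3:ℝ) * d ≤ 2 ^ (d-1) := by exact_mod_cast hnat
    rw [div_lt_one (by linarith)]
    have hd3 : (3:ℝ) ≤ d := by exact_mod_cast hd
    linarith
end
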